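/- arXiv:1101.6002 — 4 statements merged into one kernel-verified Lean document; each statement's English description precedes it below -/
import Mathlib

section
/- Two planar graphs are 2-isomorphic (there is a bijection of edge sets carrying cycles to cycles) if and only if they have the same set of abstract duals. -/
open scoped Classical

/-- A finite multigraph: edges with a source and target vertex. -/
structure Multigraph (V E : Type) where
  src : E → V
  tgt : E → V

/-- A dart is an oriented edge: an edge together with a direction. -/
abbrev Dart (E : Type) := E × Bool

namespace Multigraph

variable {V E : Type}

/-- Source of a dart. -/
def dsrc (G : Multigraph V E) (d : Dart E) : V := if d.2 then G.src d.1 else G.tgt d.1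

/-- Target of a dart. -/
def dtgt (G : Multigraph V E) (d : Dart E) : V := if d.2 then G.tgt d.1 else G.src d.1

/-- A closed walk: a nonempty cyclically consistent list of darts. -/
def IsClosedWalk (G : Multigraph V E) (w : List (Dart E)) : Prop :=
  w ≠ [] ∧ List.Chain' (fun d d' => G.dtgt d = G.dsrc d') w ∧
    ∀ dl ∈ w.getLast?, ∀ dh ∈ w.head?, G.dtgt dl = G.dsrc dh

/-- A cycle: a closed walk repeating no edges and no vertices. -/
def IsCycle (G : Multigraph V E) (w : List (Dart E)) : Prop :=
  G.IsClosedWalk w ∧ (w.map Prod.fst).Nodup ∧ (w.map G.dsrc).Nodup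

/-- A walk from `u` to `v`. -/
def IsWalkFrom (G : Multigraph V E) (w : List (Dart E)) (u v : V) : Prop :=
  List.Chain' (fun d d' => G.dtgt d = G.dsrc d') w ∧
    (w = [] → u = v) ∧ (∀ d ∈ w.head?, G.dsrc d = u) ∧ (∀ d ∈ w.getLast?, G.dtgt d = v)

/-- Connectivity: any two vertices are joined by a walk. -/
def Conn (G : Multigraph V E) : Prop := ∀ u v : V, ∃ w, G.IsWalkFrom w u v

/-- The 1-chain (with `ℤ` coefficients) of a single dart. -/
noncomputable def dartChain (d : Dart E) : E → ℤ :=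
  fun e => if d.1 = e then (if d.2 then 1 else -1) else 0

/-- The 1-chain of a walk. -/
noncomputable def chain (w : List (Dart E)) : E → ℤ := (w.map dartChain).sum

/-- The length of a walk given edge lengths `l`. -/
def walkLength (l : E → ℝ) (w : List (Dart E)) : ℝ := (w.map fun d => l d.1).sum

/-- The set of (unoriented) edges used by a walk. -/
def edges (w : List (Dart E)) : Set E := {e | ∃ b, (e, b) ∈ w}

/-- The set of vertices visited by a closed walk. -/
def vertsOf (G : Multigraph V E) (w : List (Dart E)) : Set V := {v | ∃ d ∈ w, G.dsrc d = v}

/-- Restriction of a graph to a set of edges. -/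
def restrict (G : Multigraph V E) (S : Set E) : Multigraph V S where
  src e := G.src e.1
  tgt e := G.tgt e.1

/-- Deletion of a set of vertices (and all incident edges). -/
def deleteVerts (G : Multigraph V E) (X : Set V) :
    Multigraph {v // v ∉ X} {e // G.src e ∉ X ∧ G.tgt e ∉ X} where
  src e := ⟨G.src e.1, e.2.1⟩
  tgt e := ⟨G.tgt e.1, e.2.2⟩

/-- Degree of a vertex (loops count twice). -/
noncomputable def degree (G : Multigraph V E) [Fintype E] (v : V) : ℕ :=
  (Finset.univ.filter fun e => G.src e = v).card +
  (Finset.univ.filter fun e => G.tgt e = v).card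

/-- The boundary of a 1-chain. -/
noncomputable def boundary (G : Multigraph V E) [Fintype E] (x : E → ℤ) : V → ℤ :=
  fun v => ∑ e, x e * ((if G.tgt e = v then 1 else 0) - (if G.src e = v then 1 else 0))

/-- The first homology `H₁(G,ℤ)`, as the kernel of the boundary map. -/
def H1 (G : Multigraph V E) [Fintype E] : Submodule ℤ (E → ℤ) where
  carrier := {x | G.boundary x = 0}
  add_mem' := by
    intro a b ha hb
    have h : G.boundary (a + b) = G.boundary a + G.boundary b := by
      funext v
      simp [boundary, add_mul, Finset.sum_add_distrib]
    simp only [Set.mem_setOf_eq] at *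
    rw [h, ha, hb, add_zero]
  zero_mem' := by
    simp only [Set.mem_setOf_eq]
    funext v
    simp [boundary]
  smul_mem' := by
    intro c x hx
    have h : G.boundary (c • x) = c • G.boundary x := by
      funext v
      simp [boundary, Finset.mul_sum, mul_assoc]
    simp only [Set.mem_setOf_eq] at *
    rw [h, hx, smul_zero]

/-- The path metric induced by edge lengths. -/
noncomputable def gdist (G : Multigraph V E) (l : E → ℝ) (u v : V) : ℝ :=
  sInf {x | ∃ w, G.IsWalkFrom w u v ∧ walkLength l w = x}

/-- Minimal length of a closed walk in a given homology class. -/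
noncomputable def minLen (G : Multigraph V E) (l : E → ℝ) (h : E → ℤ) : ℝ :=
  sInf {x | ∃ w, G.IsClosedWalk w ∧ chain w = h ∧ walkLength l w = x}

end Multigraph

open Multigraph

/-- The `𝔽₂` edge-indicator chain of a walk. -/
noncomputable def chain2 {E : Type} (w : List (Dart E)) : E → ZMod 2 :=
  fun e => if e ∈ Multigraph.edges w then 1 else 0

/-- The cycle space of `G` over `𝔽₂`: the span of the indicator vectors of cycles. -/
noncomputable def cycleSpace {V E : Type} (G : Multigraph V E) : Submodule (ZMod 2) (E → ZMod 2) :=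
  Submodule.span (ZMod 2) {x | ∃ w, G.IsCycle w ∧ chain2 w = x}

/-- Two oriented cycles have an edge of positive overlap if they traverse some common edge
in the same direction. -/
def PositiveOverlap {E : Type} (w w' : List (Dart E)) : Prop :=
  ∃ d : Dart E, d ∈ w ∧ d ∈ w'

/-- MacLane's criterion, taken as the definition of planarity: the cycle space over `𝔽₂`
has a simple basis consisting of cycles (each edge lies in at most two basis cycles). -/
def IsPlanarMacLane {V E : Type} [Fintype E] (G : Multigraph V E) : Prop :=
  ∃ (n : ℕ) (b : Module.Basis (Fin n) (ZMod 2) (cycleSpace G)) (c : Fin n → List (Dart E)),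
    (∀ i, G.IsCycle (c i) ∧ ((b i : cycleSpace G) : E → ZMod 2) = chain2 (c i)) ∧
    ∀ e : E, (Finset.univ.filter fun i => e ∈ Multigraph.edges (c i)).card ≤ 2

/-- A set of edges is an edge cut if deleting it disconnects the graph. -/
def IsEdgeCut {V E : Type} (G : Multigraph V E) (S : Set E) : Prop :=
  ¬ (G.restrict Sᶜ).Conn

/-- A minimal cut: an edge cut no proper subset of which is a cut. -/
def IsMinimalCut {V E : Type} (G : Multigraph V E) (S : Set E) : Prop :=
  IsEdgeCut G S ∧ ∀ S' ⊂ S, ¬ IsEdgeCut G S'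

/-- A set of edges forming a cycle. -/
def IsCycleSet {V E : Type} (G : Multigraph V E) (S : Set E) : Prop :=
  ∃ w, G.IsCycle w ∧ Multigraph.edges w = S

/-- `G'` is an abstract dual of `G`: some edge bijection carries cycles of `G` exactly to
minimal cuts of `G'`. -/
def IsAbstractDual {V E V' E' : Type} (G : Multigraph V E) (G' : Multigraph V' E') : Prop :=
  ∃ ψ : E ≃ E', ∀ S : Set E, IsCycleSet G S ↔ IsMinimalCut G' (ψ '' S)

/-- `G` and `H` are 2-isomorphic: some edge bijection carries cycles to cycles. -/
def TwoIsomorphic {V E V' E' : Type} (G : Multigraph V E) (H : Multigraph V' E') : Prop :=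
  ∃ φ : E ≃ E', ∀ S : Set E, IsCycleSet G S ↔ IsCycleSet H (φ '' S)

namespace Multigraph

variable {A B : Type} (K : Multigraph A B)

lemma isWalkFrom_nil (u : A) : K.IsWalkFrom [] u u := by
  refine ⟨List.isChain_nil, fun _ => rfl, ?_, ?_⟩ <;> simp

lemma dsrc_negd (d : Dart B) : K.dsrc (d.1, !d.2) = K.dtgt d := by
  cases d with | mk e b => cases b <;> simp [dsrc, dtgt]

lemma dtgt_negd (d : Dart B) : K.dtgt (d.1, !d.2) = K.dsrc d := by
  cases d with | mk e b => cases b <;> simp [dsrc, dtgt]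

lemma isWalkFrom_cons {d : Dart B} {w : List (Dart B)} {u v : A}
    (h : K.IsWalkFrom (d :: w) u v) : K.dsrc d = u ∧ K.IsWalkFrom w (K.dtgt d) v := by
  obtain ⟨hc, -, hh, hl⟩ := h
  refine ⟨hh d rfl, hc.tail, ?_, ?_, ?_⟩
  · intro hw
    subst hw
    exact hl d rfl
  · intro d' hd'
    cases w with
    | nil => simp at hd'
    | cons a t =>
      simp only [List.head?_cons, Option.mem_some_iff] at hd'
      subst hd'
      exact (List.isChain_cons_cons.1 hc).1.symm
  · intro d' hd'
    apply hl
    cases w with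
    | nil => simp at hd'
    | cons a t => rw [List.getLast?_cons_cons]; exact hd'

lemma isWalkFrom_append_dart {w : List (Dart B)} {u a : A}
    (h : K.IsWalkFrom w u a) (d : Dart B) (hd : K.dsrc d = a) :
    K.IsWalkFrom (w ++ [d]) u (K.dtgt d) := by
  obtain ⟨hc, hn, hh, hl⟩ := h
  refine ⟨?_, by simp, ?_, ?_⟩
  · apply List.IsChain.append hc (List.isChain_singleton d)
    intro x hx y hy
    simp only [List.head?_cons, Option.mem_some_iff] at hy
    subst hy
    rw [hl x hx, hd]
  · intro d' hd'
    cases w with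
    | nil =>
      simp only [List.nil_append, List.head?_cons, Option.mem_some_iff] at hd'
      subst hd'
      rw [hd, hn rfl]
    | cons x t =>
      simp only [List.cons_append, List.head?_cons, Option.mem_some_iff] at hd'
      subst hd'
      exact hh _ rfl
  · intro d' hd'
    rw [List.getLast?_concat] at hd'
    simp only [Option.mem_some_iff] at hd'
    subst hd'
    rfl

lemma walk_mem_iff {X : Set A} (hX : ∀ d : Dart B, K.dsrc d ∈ X ↔ K.dtgt d ∈ X) :
    ∀ (w : List (Dart B)) (u v : A), K.IsWalkFrom w u v → (u ∈ X ↔ v ∈ X) := by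
  intro w
  induction w with
  | nil => intro u v h; rw [h.2.1 rfl]
  | cons d t ih =>
    intro u v h
    obtain ⟨h1, h2⟩ := K.isWalkFrom_cons h
    rw [← h1, hX d]
    exact ih _ _ h2

lemma not_conn_of_cut {X : Set A} (u v : A) (hu : u ∈ X) (hv : v ∉ X)
    (hX : ∀ d : Dart B, K.dsrc d ∈ X ↔ K.dtgt d ∈ X) : ¬ K.Conn := by
  intro hc
  obtain ⟨w, hw⟩ := hc u v
  exact hv ((K.walk_mem_iff hX w u v hw).1 hu)

/-- From disconnection, extract a vertex set with no crossing darts. -/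
lemma exists_cut_set (h : ¬ K.Conn) :
    ∃ (X : Set A) (u v : A), u ∈ X ∧ v ∉ X ∧
      ∀ d : Dart B, (K.dsrc d ∈ X ↔ K.dtgt d ∈ X) := by
  rw [Conn] at h
  push_neg at h
  obtain ⟨u, v, huv⟩ := h
  refine ⟨{a | ∃ w, K.IsWalkFrom w u a}, u, v, ⟨[], K.isWalkFrom_nil u⟩, ?_, ?_⟩
  · rintro ⟨w, hw⟩
    exact huv w hw
  · intro d
    constructor
    · rintro ⟨w, hw⟩
      exact ⟨w ++ [d], K.isWalkFrom_append_dart hw d rfl⟩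
    · rintro ⟨w, hw⟩
      refine ⟨w ++ [(d.1, !d.2)], ?_⟩
      have := K.isWalkFrom_append_dart hw (d.1, !d.2) (K.dsrc_negd d)
      rwa [K.dtgt_negd d] at this

end Multigraph

set_option linter.unusedSectionVars false

namespace Multigraph
variable {V E : Type} [Fintype E] (G : Multigraph V E)

/-- Mod-2 boundary map. -/
noncomputable def bnd2 (x : E → ZMod 2) : V → ZMod 2 :=
  fun v => ∑ e, x e * ((if G.src e = v then 1 else 0) + (if G.tgt e = v then 1 else 0))

lemma bnd2_add (x y : E → ZMod 2) : G.bnd2 (x + y) = G.bnd2 x + G.bnd2 y := by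
  funext v
  simp [bnd2, add_mul, Finset.sum_add_distrib]

lemma bnd2_smul (c : ZMod 2) (x : E → ZMod 2) : G.bnd2 (c • x) = c • G.bnd2 x := by
  funext v
  simp [bnd2, Finset.mul_sum, mul_assoc]

lemma bnd2_zero : G.bnd2 (0 : E → ZMod 2) = 0 := by
  funext v
  simp [bnd2]

lemma map_dtgt_eq : ∀ (w : List (Dart E)) (h : w ≠ []),
    List.Chain' (fun d d' => G.dtgt d = G.dsrc d') w →
    w.map G.dtgt = (w.map G.dsrc).tail ++ [G.dtgt (w.getLast h)] := by
  intro w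
  induction w with
  | nil => intro h; exact absurd rfl h
  | cons d t ih =>
    intro h hc
    cases t with
    | nil => simp
    | cons d' t' =>
      have h2 : d' :: t' ≠ [] := by simp
      have := ih h2 (List.isChain_cons_cons.1 hc).2
      simp only [List.map_cons, List.tail_cons] at this ⊢
      rw [this, List.getLast_cons h2]
      have hd : G.dtgt d = G.dsrc d' := (List.isChain_cons_cons.1 hc).1
      rw [hd, List.cons_append]

lemma perm_dtgt_dsrc {w : List (Dart E)} (hw : G.IsClosedWalk w) :
    (w.map G.dtgt).Perm (w.map G.dsrc) := by
  obtain ⟨hne, hc, hcl⟩ := hw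
  rw [G.map_dtgt_eq w hne hc]
  have hh : G.dtgt (w.getLast hne) = G.dsrc (w.head hne) := by
    apply hcl
    · rw [List.getLast?_eq_getLast hne]; rfl
    · rw [List.head?_eq_head hne]; rfl
  rw [hh]
  have : w.map G.dsrc = G.dsrc (w.head hne) :: (w.map G.dsrc).tail := by
    cases w with
    | nil => exact absurd rfl hne
    | cons a t => simp
  conv_rhs => rw [this]
  exact List.perm_append_singleton _ _

lemma chain2_eq {w : List (Dart E)} (e : E) :
    chain2 w e = if e ∈ w.map Prod.fst then 1 else 0 := by
  have : e ∈ Multigraph.edges w ↔ e ∈ w.map Prod.fst := by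
    simp only [Multigraph.edges, Set.mem_setOf_eq, List.mem_map]
    constructor
    · rintro ⟨b, hb⟩; exact ⟨(e, b), hb, rfl⟩
    · rintro ⟨⟨e', b⟩, hb, rfl⟩; exact ⟨b, hb⟩
  simp [chain2, this]

variable [Fintype V]

lemma list_sum_map_add {α M : Type*} [AddCommMonoid M] (l : List α) (f g : α → M) :
    (l.map (fun d => f d + g d)).sum = (l.map f).sum + (l.map g).sum := by
  induction l with
  | nil => simp
  | cons a t ih => simp only [List.map_cons, List.sum_cons, ih]; abel

lemma bnd2_chain2 {w : List (Dart E)} (hw : G.IsClosedWalk w)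
    (h2 : (w.map Prod.fst).Nodup) : G.bnd2 (chain2 w) = 0 := by
  funext v
  show ∑ e, chain2 w e * _ = 0
  have step1 : ∀ e : E, chain2 w e *
      ((if G.src e = v then 1 else 0) + (if G.tgt e = v then (1 : ZMod 2) else 0)) =
      if e ∈ w.map Prod.fst then
        ((if G.src e = v then 1 else 0) + (if G.tgt e = v then (1 : ZMod 2) else 0)) else 0 := by
    intro e
    rw [chain2_eq]
    split <;> simp
  simp only [step1, ← List.mem_toFinset]
  rw [Finset.sum_ite_mem, Finset.univ_inter, List.sum_toFinset _ h2]
  have step2 : (w.map Prod.fst).map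
      (fun e => (if G.src e = v then 1 else 0) + (if G.tgt e = v then (1 : ZMod 2) else 0)) =
      w.map (fun d => (if G.dsrc d = v then 1 else 0) + (if G.dtgt d = v then (1 : ZMod 2) else 0)) := by
    rw [List.map_map]
    apply List.map_congr_left
    rintro ⟨e, b⟩ _
    cases b <;> simp [dsrc, dtgt] <;> ring
  rw [step2]
  have step3 : (w.map (fun d => (if G.dsrc d = v then 1 else 0) + (if G.dtgt d = v then (1 : ZMod 2) else 0))).sum
      = (w.map (fun d => if G.dsrc d = v then (1:ZMod 2) else 0)).sum
        + (w.map (fun d => if G.dtgt d = v then (1:ZMod 2) else 0)).sum :=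
    list_sum_map_add w _ _
  rw [step3]
  have step4 : (w.map (fun d => if G.dtgt d = v then (1:ZMod 2) else 0)).sum
      = (w.map (fun d => if G.dsrc d = v then (1:ZMod 2) else 0)).sum := by
    have : ∀ l l' : List V, l.Perm l' →
        (l.map (fun u => if u = v then (1:ZMod 2) else 0)).sum
        = (l'.map (fun u => if u = v then (1:ZMod 2) else 0)).sum := by
      intro l l' hp
      exact List.Perm.sum_eq (hp.map _)
    have h := this _ _ (G.perm_dtgt_dsrc hw)
    simpa [List.map_map, Function.comp_def] using h
  rw [step4]
  have : ∀ a : ZMod 2, a + a = 0 := by decide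
  exact this _

lemma bnd2_zero_of_mem (x : E → ZMod 2) (hx : x ∈ cycleSpace G) : G.bnd2 x = 0 := by
  induction hx using Submodule.span_induction with
  | mem y hy =>
    obtain ⟨w, hw, rfl⟩ := hy
    exact G.bnd2_chain2 hw.1 hw.2.1
  | zero => exact G.bnd2_zero
  | add y z _ _ hy hz => rw [G.bnd2_add, hy, hz, add_zero]
  | smul c y _ hy => rw [G.bnd2_smul, hy, smul_zero]

lemma even_incidence (x : E → ZMod 2) (hx : G.bnd2 x = 0) (v : V) :
    Even ((Finset.univ.filter fun e => x e ≠ 0 ∧ G.src e = v).card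
        + (Finset.univ.filter fun e => x e ≠ 0 ∧ G.tgt e = v).card) := by
  have h01 : ∀ a : ZMod 2, a ≠ 0 ↔ a = 1 := by decide
  have e1 : ∀ e, x e * (if G.src e = v then (1:ZMod 2) else 0)
      = if x e ≠ 0 ∧ G.src e = v then 1 else 0 := by
    intro e
    rcases (by decide : ∀ a : ZMod 2, a = 0 ∨ a = 1) (x e) with h | h <;> rw [h] <;> simp
  have e2 : ∀ e, x e * (if G.tgt e = v then (1:ZMod 2) else 0)
      = if x e ≠ 0 ∧ G.tgt e = v then 1 else 0 := by
    intro e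
    rcases (by decide : ∀ a : ZMod 2, a = 0 ∨ a = 1) (x e) with h | h <;> rw [h] <;> simp
  have hv : G.bnd2 x v = 0 := by rw [hx]; rfl
  rw [bnd2] at hv
  simp only [mul_add, e1, e2] at hv
  rw [Finset.sum_add_distrib, Finset.sum_boole, Finset.sum_boole] at hv
  have h0 : ((((Finset.univ.filter fun e => x e ≠ 0 ∧ G.src e = v).card
        + (Finset.univ.filter fun e => x e ≠ 0 ∧ G.tgt e = v).card : ℕ)) : ZMod 2) = 0 := by
    push_cast
    exact hv
  rw [ZMod.natCast_eq_zero_iff] at h0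
  exact even_iff_two_dvd.2 h0

end Multigraph

namespace Multigraph
variable {V E : Type} (G : Multigraph V E)

lemma edges_subset {w : List (Dart E)} {S : Set E} (h : ∀ d ∈ w, d.1 ∈ S) :
    Multigraph.edges w ⊆ S := by
  rintro e ⟨b, hb⟩
  exact h (e, b) hb

lemma cycle_of_loop (e : E) (h : G.src e = G.tgt e) : G.IsCycle [(e, true)] := by
  refine ⟨⟨by simp, List.isChain_singleton _, ?_⟩, by simp, by simp⟩
  intro dl hl dh hh
  simp only [List.getLast?_singleton, Option.mem_some_iff, List.head?_cons] at hl hh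
  subst hl; subst hh
  simp [dsrc, dtgt, h]

/-- In a chain, every dart is the last one or its target is a source of some dart. -/
lemma dtgt_mem_or_last : ∀ (p : List (Dart E)) (hne : p ≠ []),
    List.Chain' (fun d d' => G.dtgt d = G.dsrc d') p →
    ∀ q ∈ p, q = p.getLast hne ∨ G.dtgt q ∈ p.map G.dsrc := by
  intro p
  induction p with
  | nil => intro h; exact absurd rfl h
  | cons a t ih =>
    intro hne hc q hq
    cases t with
    | nil =>
      left
      simpa using hq
    | cons b t' =>
      rcases List.mem_cons.1 hq with rfl | hq'
      · right
        have : G.dtgt q = G.dsrc b := (List.isChain_cons_cons.1 hc).1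
        simp [this]
      · rcases ih (by simp) (List.isChain_cons_cons.1 hc).2 q hq' with h | h
        · left
          rw [List.getLast_cons (by simp : (b :: t') ≠ [])]
          exact h
        · right
          simp only [List.map_cons, List.mem_cons] at h ⊢
          tauto

/-- Close a path into a cycle when the endpoint revisits a vertex. -/
lemma close_path {p : List (Dart E)} (hne : p ≠ [])
    (hc : List.Chain' (fun d d' => G.dtgt d = G.dsrc d') p)
    (hf : (p.map Prod.fst).Nodup) (hs : (p.map G.dsrc).Nodup)
    (hv : G.dtgt (p.getLast hne) ∈ p.map G.dsrc) :
    ∃ w, G.IsCycle w ∧ ∀ d ∈ w, d ∈ p := by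
  obtain ⟨i, hi⟩ := List.mem_iff_get.1 hv
  have hilen : (i : ℕ) < p.length := by
    have := i.2
    simpa using this
  refine ⟨p.drop i, ⟨⟨?_, ?_, ?_⟩, ?_, ?_⟩, ?_⟩
  · intro h
    have := (List.length_drop (i := (i : ℕ)) (l := p)) ▸ congrArg List.length h
    simp at this
    omega
  · exact hc.suffix (List.drop_suffix _ _)
  · have hdne : p.drop i ≠ [] := by
      intro h
      have := (List.length_drop (i := (i : ℕ)) (l := p)) ▸ congrArg List.length h
      simp at this
      omega
    intro dl hl dh hh
    have hlast : (p.drop i).getLast hdne = p.getLast hne := by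
      have h1 : p.getLast? = ((p.take i ++ p.drop i)).getLast? := by
        rw [List.take_append_drop]
      rw [List.getLast?_append, List.getLast?_eq_getLast_of_ne_nil hdne] at h1
      simp only [Option.some_or] at h1
      rw [List.getLast?_eq_getLast_of_ne_nil hne] at h1
      exact (Option.some_inj.1 h1).symm
    have hhead : dh = p[(i:ℕ)]'hilen := by
      have h2 : (List.drop (i:ℕ) p).head? = p[(i:ℕ)]? := List.head?_drop (l := p) (i := i)
      rw [h2, List.getElem?_eq_getElem hilen] at hh
      exact (Option.mem_some_iff.1 hh).symm
    rw [List.getLast?_eq_getLast_of_ne_nil hdne] at hl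
    rw [Option.mem_some_iff] at hl
    subst hl
    rw [hlast, hhead]
    have h3 : (List.map G.dsrc p).get i = G.dsrc (p[(i:ℕ)]'hilen) := by
      rw [List.get_eq_getElem, List.getElem_map]
    rw [h3] at hi
    exact hi.symm
  · exact hf.sublist ((List.drop_sublist _ _).map _)
  · exact hs.sublist ((List.drop_sublist _ _).map _)
  · intro d hd
    exact (List.drop_sublist _ _).mem hd

end Multigraph

namespace Multigraph
variable {V E : Type} [Fintype V] [Fintype E] (G : Multigraph V E)

lemma extend_path (x : E → ZMod 2) (hb : G.bnd2 x = 0) :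
    ∀ (k : ℕ) (p : List (Dart E)), p ≠ [] →
      List.Chain' (fun d d' => G.dtgt d = G.dsrc d') p →
      (∀ d ∈ p, x d.1 ≠ 0) →
      (p.map Prod.fst).Nodup →
      (p.map G.dsrc).Nodup →
      Fintype.card V ≤ p.length + k →
      ∃ w, G.IsCycle w ∧ Multigraph.edges w ⊆ {e | x e ≠ 0} := by
  intro k
  induction k with
  | zero =>
    intro p hne hc hsupp hf hs hcard
    by_cases hv : G.dtgt (p.getLast hne) ∈ p.map G.dsrc
    · obtain ⟨w, hw, hmem⟩ := G.close_path hne hc hf hs hv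
      exact ⟨w, hw, Multigraph.edges_subset fun d hd => hsupp d (hmem d hd)⟩
    · exfalso
      have hnd : (G.dtgt (p.getLast hne) :: p.map G.dsrc).Nodup := List.nodup_cons.2 ⟨hv, hs⟩
      have := hnd.length_le_card
      simp only [List.length_cons, List.length_map] at this
      omega
  | succ k ih =>
    intro p hne hc hsupp hf hs hcard
    by_cases hv : G.dtgt (p.getLast hne) ∈ p.map G.dsrc
    · obtain ⟨w, hw, hmem⟩ := G.close_path hne hc hf hs hv
      exact ⟨w, hw, Multigraph.edges_subset fun d hd => hsupp d (hmem d hd)⟩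
    · -- extend the path
      set d := p.getLast hne with hd
      set v := G.dtgt d with hvdef
      set ed := d.1 with hed
      have hdmem : d ∈ p := List.getLast_mem hne
      have hdsrc_ne : G.dsrc d ≠ v := by
        intro h
        exact hv (h ▸ List.mem_map_of_mem (f := G.dsrc) hdmem)
      have hxed : x ed ≠ 0 := hsupp d hdmem
      -- exactly one endpoint of ed is v
      have hed_ends : (G.src ed = v ∧ G.tgt ed ≠ v) ∨ (G.tgt ed = v ∧ G.src ed ≠ v) := by
        rcases d with ⟨e, b⟩
        cases b
        · left
          constructor
          · exact hvdef ▸ rfl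
          · intro h; exact hdsrc_ne h
        · right
          constructor
          · exact hvdef ▸ rfl
          · intro h; exact hdsrc_ne h
      -- find another edge incident to v
      have hexists : ∃ f, f ≠ ed ∧ x f ≠ 0 ∧ (G.src f = v ∨ G.tgt f = v) := by
        by_contra hno
        push_neg at hno
        have hA : (Finset.univ.filter fun e => x e ≠ 0 ∧ G.src e = v)
            = if G.src ed = v then {ed} else ∅ := by
          ext f
          simp only [Finset.mem_filter, Finset.mem_univ, true_and]
          split
          · next h =>
            simp only [Finset.mem_singleton]
            constructor
            · rintro ⟨hxf, hsf⟩
              by_contra hfe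
              exact (hno f hfe hxf).1 hsf
            · rintro rfl
              exact ⟨hxed, h⟩
          · next h =>
            simp only [Finset.notMem_empty, iff_false, not_and]
            intro hxf hsf
            by_cases hfe : f = ed
            · exact h (hfe ▸ hsf)
            · exact (hno f hfe hxf).1 hsf
        have hB : (Finset.univ.filter fun e => x e ≠ 0 ∧ G.tgt e = v)
            = if G.tgt ed = v then {ed} else ∅ := by
          ext f
          simp only [Finset.mem_filter, Finset.mem_univ, true_and]
          split
          · next h =>
            simp only [Finset.mem_singleton]
            constructor
            · rintro ⟨hxf, hsf⟩
              by_contra hfe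
              exact (hno f hfe hxf).2 hsf
            · rintro rfl
              exact ⟨hxed, h⟩
          · next h =>
            simp only [Finset.notMem_empty, iff_false, not_and]
            intro hxf hsf
            by_cases hfe : f = ed
            · exact h (hfe ▸ hsf)
            · exact (hno f hfe hxf).2 hsf
        have heven := G.even_incidence x hb v
        rw [hA, hB] at heven
        rcases hed_ends with ⟨h1, h2⟩ | ⟨h1, h2⟩
        · rw [if_pos h1, if_neg h2] at heven
          simp at heven
        · rw [if_neg h2, if_pos h1] at heven
          simp at heven
      obtain ⟨f, hfne, hxf, hfinc⟩ := hexists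
      by_cases hloop : G.src f = G.tgt f
      · exact ⟨[(f, true)], G.cycle_of_loop f hloop, Multigraph.edges_subset (by
          rintro d' hd'
          simp only [List.mem_singleton] at hd'
          subst hd'
          exact hxf)⟩
      · -- orient f out of v
        set d' : Dart E := if G.src f = v then (f, true) else (f, false) with hd'def
        have hd'src : G.dsrc d' = v := by
          rw [hd'def]
          split
          · next h => simpa [dsrc] using h
          · next h =>
            rcases hfinc with h' | h'
            · exact absurd h' h
            · simpa [dsrc] using h'
        have hd'fst : d'.1 = f := by
          rw [hd'def]; split <;> rfl
        have hd'tgt_ne : G.dtgt d' ≠ v := by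
          rw [hd'def]
          split
          · next h =>
            simp only [dtgt]
            intro hh
            exact hloop (h.trans hh.symm)
          · next h =>
            simp only [dtgt]
            exact h
        -- f is not an edge of p
        have hfnotin : f ∉ p.map Prod.fst := by
          intro hfin
          obtain ⟨q, hq, hqf⟩ := List.mem_map.1 hfin
          rcases G.dtgt_mem_or_last p hne hc q hq with hql | hqt
          · exact hfne (hqf ▸ hql ▸ rfl)
          · -- q is not last, so both endpoints of f avoid v
            have h1 : G.dsrc q ≠ v := fun h => hv (h ▸ List.mem_map_of_mem (f := G.dsrc) hq)
            have h2 : G.dtgt q ≠ v := fun h => hv (h ▸ hqt)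
            rcases q with ⟨e, b⟩
            cases hqf
            cases b
            · rcases hfinc with h' | h' 
              · exact h2 h'
              · exact h1 h'
            · rcases hfinc with h' | h'
              · exact h1 h'
              · exact h2 h'
        -- apply induction hypothesis to p ++ [d']
        have hne' : p ++ [d'] ≠ [] := by simp
        have hc' : List.Chain' (fun a b => G.dtgt a = G.dsrc b) (p ++ [d']) := by
          apply List.IsChain.append hc (List.isChain_singleton d')
          intro y hy z hz
          simp only [List.head?_cons, Option.mem_some_iff] at hz
          subst hz
          rw [List.getLast?_eq_getLast_of_ne_nil hne, Option.mem_some_iff] at hy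
          subst hy
          rw [hd'src]
        have hsupp' : ∀ q ∈ p ++ [d'], x q.1 ≠ 0 := by
          intro q hq
          rcases List.mem_append.1 hq with h | h
          · exact hsupp q h
          · simp only [List.mem_singleton] at h
            subst h
            rw [hd'fst]
            exact hxf
        have hf' : ((p ++ [d']).map Prod.fst).Nodup := by
          rw [List.map_append]
          apply List.Nodup.append hf (by simp)
          intro a ha hb2
          simp only [List.map_cons, List.map_nil, List.mem_singleton, hd'fst] at hb2
          subst hb2
          exact hfnotin ha
        have hs' : ((p ++ [d']).map G.dsrc).Nodup := by
          rw [List.map_append]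
          apply List.Nodup.append hs (by simp)
          intro a ha hb2
          simp only [List.map_cons, List.map_nil, List.mem_singleton, hd'src] at hb2
          subst hb2
          exact hv ha
        have hcard' : Fintype.card V ≤ (p ++ [d']).length + k := by
          simp only [List.length_append, List.length_singleton]
          omega
        exact ih (p ++ [d']) hne' hc' hsupp' hf' hs' hcard'

lemma exists_cycle_of_even (x : E → ZMod 2) (hb : G.bnd2 x = 0) (hx : x ≠ 0) :
    ∃ w, G.IsCycle w ∧ Multigraph.edges w ⊆ {e | x e ≠ 0} := by
  have : ∃ e, x e ≠ 0 := by
    by_contra h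
    push_neg at h
    exact hx (funext h)
  obtain ⟨e0, he0⟩ := this
  by_cases hloop : G.src e0 = G.tgt e0
  · exact ⟨[(e0, true)], G.cycle_of_loop e0 hloop, Multigraph.edges_subset (by
      rintro d hd
      simp only [List.mem_singleton] at hd
      subst hd
      exact he0)⟩
  · apply G.extend_path x hb (Fintype.card V) [(e0, true)] (by simp) (List.isChain_singleton _)
    · intro d hd
      simp only [List.mem_singleton] at hd
      subst hd
      exact he0
    · simp
    · simp
    · simp

end Multigraph

namespace Multigraph
variable {V E : Type} (G : Multigraph V E)

open Fin.NatCast in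
lemma fin_cyclic_closure {m : ℕ} [NeZero m] (A : Set (Fin m)) (a : Fin m) (ha : a ∈ A)
    (hstep : ∀ k ∈ A, k + 1 ∈ A) : ∀ k, k ∈ A := by
  have h1 : ∀ j : ℕ, a + (j : Fin m) ∈ A := by
    intro j
    induction j with
    | zero => simpa using ha
    | succ j ih =>
      have hcast : ((j + 1 : ℕ) : Fin m) = (j : Fin m) + 1 := by push_cast; ring
      rw [hcast, ← add_assoc]
      exact hstep _ ih
  intro k
  have := h1 ((k - a).val)
  rwa [Fin.cast_val_eq_self, add_comm, sub_add_cancel] at this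

lemma dart_endpoints (d : Dart E) :
    (G.src d.1 = G.dsrc d ∧ G.tgt d.1 = G.dtgt d) ∨
    (G.src d.1 = G.dtgt d ∧ G.tgt d.1 = G.dsrc d) := by
  rcases d with ⟨e, b⟩
  cases b
  · right; exact ⟨rfl, rfl⟩
  · left; exact ⟨rfl, rfl⟩

lemma mem_edges_iff_get {w : List (Dart E)} (e : E) :
    e ∈ Multigraph.edges w ↔ ∃ k : Fin w.length, (w.get k).1 = e := by
  constructor
  · rintro ⟨b, hb⟩
    obtain ⟨k, hk⟩ := List.mem_iff_get.1 hb
    exact ⟨k, by rw [hk]⟩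
  · rintro ⟨k, rfl⟩
    refine ⟨(w.get k).2, ?_⟩
    simpa using List.get_mem w k

lemma closedWalk_get_succ {w : List (Dart E)} (hw : G.IsClosedWalk w)
    (k : Fin w.length) [NeZero w.length] :
    G.dtgt (w.get k) = G.dsrc (w.get (k + 1)) := by
  obtain ⟨hne, hc, hcl⟩ := hw
  have hpos : 0 < w.length := Nat.pos_of_ne_zero (NeZero.ne _)
  by_cases h : (k : ℕ) + 1 < w.length
  · have hval : ((k + 1 : Fin w.length) : ℕ) = (k : ℕ) + 1 := by
      rw [Fin.val_add, Fin.val_one',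
        Nat.mod_eq_of_lt (show 1 < w.length by omega)]
      exact Nat.mod_eq_of_lt h
    have hchain : G.dtgt (w.get ⟨(k : ℕ), by omega⟩) = G.dsrc (w.get ⟨(k : ℕ) + 1, by omega⟩) :=
      List.isChain_iff_getElem.1 hc (k : ℕ) (by omega)
    have e1 : w.get ⟨(k : ℕ), by omega⟩ = w.get k := congrArg w.get (Fin.ext rfl)
    have e2 : w.get ⟨(k : ℕ) + 1, by omega⟩ = w.get (k + 1) :=
      congrArg w.get (Fin.ext hval.symm)
    rwa [e1, e2] at hchain
  · have hkval : (k : ℕ) = w.length - 1 := by have := k.2; omega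
    have hzero : ((k + 1 : Fin w.length) : ℕ) = 0 := by
      rw [Fin.val_add, Fin.val_one']
      by_cases h1 : w.length = 1
      · simp [h1, Nat.mod_one]
      · rw [Nat.mod_eq_of_lt (show 1 < w.length by omega), hkval]
        have h3 : w.length - 1 + 1 = w.length := by omega
        rw [h3, Nat.mod_self]
    have hlast : w.get k = w.getLast hne := by
      rw [List.getLast_eq_getElem]
      show w[(k : ℕ)]'k.2 = _
      congr 1
    have hhead : w.get (k + 1) = w.head hne := by
      rw [List.head_eq_getElem]
      show w[((k + 1 : Fin w.length) : ℕ)]'(k+1).2 = _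
      congr 1
    rw [hlast, hhead]
    apply hcl
    · rw [List.getLast?_eq_getLast_of_ne_nil hne]; rfl
    · rw [List.head?_eq_head hne]; rfl

end Multigraph

namespace Multigraph
variable {V E : Type} (G : Multigraph V E)

lemma incident_self (d : Dart E) : G.src d.1 = G.dsrc d ∨ G.tgt d.1 = G.dsrc d := by
  rcases G.dart_endpoints d with ⟨h1, h2⟩ | ⟨h1, h2⟩
  · left; exact h1
  · right; exact h2

lemma incident_tgt (d : Dart E) : G.src d.1 = G.dtgt d ∨ G.tgt d.1 = G.dtgt d := by
  rcases G.dart_endpoints d with ⟨h1, h2⟩ | ⟨h1, h2⟩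
  · right; exact h2
  · left; exact h1

lemma cycle_edges_eq_of_subset {w w' : List (Dart E)} (hw : G.IsCycle w) (hw' : G.IsCycle w')
    (hsub : Multigraph.edges w' ⊆ Multigraph.edges w) :
    Multigraph.edges w' = Multigraph.edges w := by
  obtain ⟨hcw, hfw, hsw⟩ := hw
  obtain ⟨hcw', hfw', hsw'⟩ := hw'
  have hne : w ≠ [] := hcw.1
  have hne' : w' ≠ [] := hcw'.1
  haveI : NeZero w.length := ⟨fun h => hne (List.length_eq_zero_iff.1 h)⟩
  haveI : NeZero w'.length := ⟨fun h => hne' (List.length_eq_zero_iff.1 h)⟩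
  have hpos : 0 < w.length := Nat.pos_of_ne_zero (NeZero.ne _)
  have hpos' : 0 < w'.length := Nat.pos_of_ne_zero (NeZero.ne _)
  have hvinj : ∀ a b : Fin w.length, G.dsrc (w.get a) = G.dsrc (w.get b) → a = b := by
    intro a b hab
    have h1 : (w.map G.dsrc).get ⟨a, by simp⟩ = (w.map G.dsrc).get ⟨b, by simp⟩ := by
      simpa using hab
    have h2 := (List.Nodup.get_inj_iff hsw).1 h1
    exact Fin.ext (congrArg Fin.val h2 : _)
  have hvinj' : ∀ a b : Fin w'.length, G.dsrc (w'.get a) = G.dsrc (w'.get b) → a = b := by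
    intro a b hab
    have h1 : (w'.map G.dsrc).get ⟨a, by simp⟩ = (w'.map G.dsrc).get ⟨b, by simp⟩ := by
      simpa using hab
    have h2 := (List.Nodup.get_inj_iff hsw').1 h1
    exact Fin.ext (congrArg Fin.val h2 : _)
  have heinj' : ∀ a b : Fin w'.length, (w'.get a).1 = (w'.get b).1 → a = b := by
    intro a b hab
    have h1 : (w'.map Prod.fst).get ⟨a, by simp⟩ = (w'.map Prod.fst).get ⟨b, by simp⟩ := by
      simpa using hab
    have h2 := (List.Nodup.get_inj_iff hfw').1 h1
    exact Fin.ext (congrArg Fin.val h2 : _)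
  have hinc : ∀ (l : Fin w.length) (u : V),
      (G.src (w.get l).1 = u ∨ G.tgt (w.get l).1 = u) →
      G.dsrc (w.get l) = u ∨ G.dsrc (w.get (l + 1)) = u := by
    intro l u hu
    have hch := G.closedWalk_get_succ hcw l
    rcases G.dart_endpoints (w.get l) with ⟨h1, h2⟩ | ⟨h1, h2⟩ <;> rcases hu with hu | hu
    · left; rw [← h1, hu]
    · right; rw [← hch, ← h2, hu]
    · right; rw [← hch, ← h1, hu]
    · left; rw [← h2, hu]
  have hinc' : ∀ (j : Fin w'.length) (u : V),
      (G.src (w'.get j).1 = u ∨ G.tgt (w'.get j).1 = u) →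
      G.dsrc (w'.get j) = u ∨ G.dsrc (w'.get (j + 1)) = u := by
    intro j u hu
    have hch := G.closedWalk_get_succ hcw' j
    rcases G.dart_endpoints (w'.get j) with ⟨h1, h2⟩ | ⟨h1, h2⟩ <;> rcases hu with hu | hu
    · left; rw [← h1, hu]
    · right; rw [← hch, ← h2, hu]
    · right; rw [← hch, ← h1, hu]
    · left; rw [← h2, hu]
  by_cases hm1 : w.length = 1
  · apply Set.Subset.antisymm hsub
    intro e he
    obtain ⟨k, hk⟩ := (mem_edges_iff_get e).1 he
    have he' : (w'.get ⟨0, hpos'⟩).1 ∈ Multigraph.edges w' :=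
      (mem_edges_iff_get _).2 ⟨⟨0, hpos'⟩, rfl⟩
    obtain ⟨k2, hk2⟩ := (mem_edges_iff_get _).1 (hsub he')
    have hkk : k = k2 := by
      apply Fin.ext
      have := k.2; have := k2.2
      omega
    rw [← hk, hkk, hk2]
    exact he'
  · have hm2 : 2 ≤ w.length := by omega
    have hone : (1 : Fin w.length) ≠ 0 := by
      intro h
      have h2 := congrArg Fin.val h
      rw [Fin.val_one', Nat.mod_eq_of_lt (by omega)] at h2
      simp at h2
    have hksucc : ∀ k : Fin w.length, k + 1 ≠ k := by
      intro k h
      apply hone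
      have h2 : k + 1 = k + 0 := by rw [add_zero]; exact h
      exact add_left_cancel h2
    have hnonloop : ∀ k : Fin w.length, G.dsrc (w.get k) ≠ G.dtgt (w.get k) := by
      intro k h
      have hch := G.closedWalk_get_succ hcw k
      rw [hch] at h
      exact hksucc k (hvinj _ _ h.symm)
    have hm2' : 2 ≤ w'.length := by
      by_contra hlt
      have hlen1 : w'.length = 1 := by omega
      have hall : ∀ a b : Fin w'.length, a = b := by
        intro a b
        apply Fin.ext
        have := a.2; have := b.2
        omega
      have hch0 := G.closedWalk_get_succ hcw' ⟨0, hpos'⟩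
      rw [hall (⟨0, hpos'⟩ + 1) ⟨0, hpos'⟩] at hch0
      set d0 := w'.get ⟨0, hpos'⟩ with hd0
      have hloop : G.src d0.1 = G.tgt d0.1 := by
        rcases G.dart_endpoints d0 with ⟨h1, h2⟩ | ⟨h1, h2⟩
        · rw [h1, h2, hch0]
        · rw [h1, h2, hch0]
      have hd0w : d0.1 ∈ Multigraph.edges w := hsub ((mem_edges_iff_get _).2 ⟨⟨0, hpos'⟩, rfl⟩)
      obtain ⟨l, hl⟩ := (mem_edges_iff_get _).1 hd0w
      apply hnonloop l
      rcases G.dart_endpoints (w.get l) with ⟨h1, h2⟩ | ⟨h1, h2⟩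
      · rw [← h1, ← h2, hl, hloop]
      · rw [← h1, ← h2, hl, hloop]
    have hone' : (1 : Fin w'.length) ≠ 0 := by
      intro h
      have h2 := congrArg Fin.val h
      rw [Fin.val_one', Nat.mod_eq_of_lt (by omega)] at h2
      simp at h2
    have hksucc' : ∀ k : Fin w'.length, k + 1 ≠ k := by
      intro k h
      apply hone'
      have h2 : k + 1 = k + 0 := by rw [add_zero]; exact h
      exact add_left_cancel h2
    set A : Set (Fin w.length) :=
      {k | ∃ j : Fin w'.length, G.dsrc (w'.get j) = G.dsrc (w.get k)} with hA
    have stepAB : ∀ k ∈ A, (w.get k).1 ∈ Multigraph.edges w' := by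
      rintro k ⟨j, hj⟩
      set u := G.dsrc (w.get k) with hu
      have hf2 : G.src (w'.get j).1 = u ∨ G.tgt (w'.get j).1 = u := by
        rcases G.incident_self (w'.get j) with h | h
        · left; rw [h, hj]
        · right; rw [h, hj]
      have htg : G.dtgt (w'.get (j - 1)) = u := by
        have hch := G.closedWalk_get_succ hcw' (j - 1)
        rw [hch, sub_add_cancel, hj]
      have hf1 : G.src (w'.get (j - 1)).1 = u ∨ G.tgt (w'.get (j - 1)).1 = u := by
        rcases G.incident_tgt (w'.get (j - 1)) with h | h
        · left; rw [h, htg]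
        · right; rw [h, htg]
      have hf12 : (w'.get (j - 1)).1 ≠ (w'.get j).1 := by
        intro h
        have h2 := heinj' _ _ h
        have h3 : j - 1 + 1 = j + 1 := by rw [h2]
        rw [sub_add_cancel] at h3
        exact hksucc' j h3.symm
      obtain ⟨l1, hl1⟩ := (mem_edges_iff_get _).1
        (hsub ((mem_edges_iff_get _).2 ⟨j - 1, rfl⟩))
      obtain ⟨l2, hl2⟩ := (mem_edges_iff_get _).1
        (hsub ((mem_edges_iff_get _).2 ⟨j, rfl⟩))
      have hc1 : l1 = k ∨ l1 + 1 = k := by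
        rcases hinc l1 u (by rw [hl1]; exact hf1) with h | h
        · left; exact hvinj _ _ h
        · right; exact hvinj _ _ h
      have hc2 : l2 = k ∨ l2 + 1 = k := by
        rcases hinc l2 u (by rw [hl2]; exact hf2) with h | h
        · left; exact hvinj _ _ h
        · right; exact hvinj _ _ h
      rcases hc1 with hk1 | hk1
      · rw [← hk1, hl1]
        exact (mem_edges_iff_get _).2 ⟨j - 1, rfl⟩
      · rcases hc2 with hk2 | hk2
        · rw [← hk2, hl2]
          exact (mem_edges_iff_get _).2 ⟨j, rfl⟩
        · exfalso
          apply hf12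
          rw [← hl1, ← hl2]
          congr 1
          have : l1 = l2 := add_right_cancel (hk1.trans hk2.symm)
          rw [this]
    have stepA : ∀ k ∈ A, k + 1 ∈ A := by
      intro k hk
      have hB := stepAB k hk
      obtain ⟨j, hj⟩ := (mem_edges_iff_get _).1 hB
      set u' := G.dtgt (w.get k) with hu'
      have hu'eq : G.dsrc (w.get (k + 1)) = u' := (G.closedWalk_get_succ hcw k).symm
      have hend : G.src (w'.get j).1 = u' ∨ G.tgt (w'.get j).1 = u' := by
        rw [hj]
        exact G.incident_tgt (w.get k)
      rcases hinc' j u' hend with h | h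
      · exact ⟨j, h.trans hu'eq.symm⟩
      · exact ⟨j + 1, h.trans hu'eq.symm⟩
    have hAne : ∃ k, k ∈ A := by
      have h0 : (w'.get ⟨0, hpos'⟩).1 ∈ Multigraph.edges w :=
        hsub ((mem_edges_iff_get _).2 ⟨⟨0, hpos'⟩, rfl⟩)
      obtain ⟨l, hl⟩ := (mem_edges_iff_get _).1 h0
      set u0 := G.dsrc (w'.get ⟨0, hpos'⟩) with hu0
      have hend : G.src (w.get l).1 = u0 ∨ G.tgt (w.get l).1 = u0 := by
        rw [hl]
        exact G.incident_self _
      rcases hinc l u0 hend with h | h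
      · exact ⟨l, ⟨⟨0, hpos'⟩, h.symm⟩⟩
      · exact ⟨l + 1, ⟨⟨0, hpos'⟩, h.symm⟩⟩
    obtain ⟨a, ha⟩ := hAne
    have hAall := fin_cyclic_closure A a ha stepA
    apply Set.Subset.antisymm hsub
    intro e he
    obtain ⟨k, hk⟩ := (mem_edges_iff_get e).1 he
    rw [← hk]
    exact stepAB k (hAall k)

end Multigraph

set_option maxHeartbeats 2000000
lemma finset_mem_minmax {n : ℕ} (s : Finset (Fin n)) (hs : s.Nonempty) (hcard : s.card ≤ 2) :
    ∀ i ∈ s, i = s.min' hs ∨ i = s.max' hs := by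
  intro i hi
  by_cases hmm : s.min' hs = s.max' hs
  · left
    have h1 : s.min' hs ≤ i := Finset.min'_le s i hi
    have h2 : i ≤ s.max' hs := Finset.le_max' s i hi
    rw [← hmm] at h2
    exact le_antisymm h1 h2 |>.symm ▸ (le_antisymm h2 h1).symm
  · by_contra hcon
    push_neg at hcon
    have hsub : ({s.min' hs, s.max' hs, i} : Finset (Fin n)) ⊆ s := by
      intro x hx
      simp only [Finset.mem_insert, Finset.mem_singleton] at hx
      rcases hx with rfl | rfl | rfl
      · exact Finset.min'_mem s hs
      · exact Finset.max'_mem s hs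
      · exact hi
    have h2 : s.max' hs ∉ ({i} : Finset (Fin n)) := by
      simp only [Finset.mem_singleton]
      intro h
      exact hcon.2 h.symm
    have h1 : s.min' hs ∉ ({s.max' hs, i} : Finset (Fin n)) := by
      simp only [Finset.mem_insert, Finset.mem_singleton]
      rintro (h | h)
      · exact hmm h
      · exact hcon.1 h.symm
    have hc3 : ({s.min' hs, s.max' hs, i} : Finset (Fin n)).card = 3 := by
      rw [Finset.card_insert_of_notMem h1, Finset.card_insert_of_notMem h2,
        Finset.card_singleton]
    have := Finset.card_le_card hsub
    omega

lemma min_eq_max_of_card_le_one {n : ℕ} (s : Finset (Fin n)) (hs : s.Nonempty)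
    (hcard : s.card ≤ 1) : s.min' hs = s.max' hs := by
  obtain ⟨a, ha⟩ := Finset.card_eq_one.1 (le_antisymm hcard (Finset.card_pos.2 hs))
  subst ha
  simp

theorem exists_abstract_dual {V E : Type} [Fintype V] [Fintype E] (G : Multigraph V E)
    (hG : IsPlanarMacLane G) :
    ∃ (n : ℕ) (D : Multigraph (Option (Fin n)) E),
      ∀ S : Set E, IsCycleSet G S ↔ IsMinimalCut D S := by
  classical
  obtain ⟨n, b, c, hbc, hsimple⟩ := hG
  set z : Fin n → E → ZMod 2 := fun i => chain2 (c i) with hz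
  set faces : E → Finset (Fin n) :=
    fun e => Finset.univ.filter (fun i => e ∈ Multigraph.edges (c i)) with hfacesdef
  have hfcard : ∀ e, (faces e).card ≤ 2 := hsimple
  have hfmem : ∀ e i, i ∈ faces e ↔ e ∈ Multigraph.edges (c i) := by
    intro e i
    simp [hfacesdef]
  refine ⟨n, {
    src := fun e => if h : (faces e).Nonempty then some ((faces e).min' h) else none
    tgt := fun e => if h : 2 ≤ (faces e).card then
      some ((faces e).max' (Finset.card_pos.1 (by omega))) else none }, ?_⟩
  set D : Multigraph (Option (Fin n)) E := {
    src := fun e => if h : (faces e).Nonempty then some ((faces e).min' h) else none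
    tgt := fun e => if h : 2 ≤ (faces e).card then
      some ((faces e).max' (Finset.card_pos.1 (by omega))) else none } with hDdef
  show ∀ S : Set E, IsCycleSet G S ↔ IsMinimalCut D S
  -- z i is in the cycle space
  have hzmem : ∀ i, z i ∈ cycleSpace G := by
    intro i
    have h := ((b i) : cycleSpace G).2
    rw [(hbc i).2] at h
    exact h
  -- sum of z over a finset, evaluated at an edge
  have hsum_eval : ∀ (T : Finset (Fin n)) (e : E),
      (∑ i ∈ T, z i) e = ((T ∩ faces e).card : ZMod 2) := by
    intro T e
    rw [Finset.sum_apply]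
    have h1 : ∀ i ∈ T, z i e = if i ∈ faces e then (1 : ZMod 2) else 0 := by
      intro i _
      simp only [hz, chain2]
      by_cases hmem2 : e ∈ Multigraph.edges (c i)
      · rw [if_pos hmem2, if_pos ((hfmem e i).2 hmem2)]
      · rw [if_neg hmem2, if_neg (fun h => hmem2 ((hfmem e i).1 h))]
    rw [Finset.sum_congr rfl h1, Finset.sum_boole]
    have h2 : T.filter (fun i => i ∈ faces e) = T ∩ faces e := by
      ext i
      simp [Finset.mem_inter]
    rw [h2]

  -- crossing characterization
  have hcast2 : ((2 : ℕ) : ZMod 2) = 0 := by decide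
  have hcast1 : ((1 : ℕ) : ZMod 2) ≠ 0 := by decide
  have hcast0 : ((0 : ℕ) : ZMod 2) = 0 := by decide
  have hcross : ∀ (T : Finset (Fin n)) (e : E),
      ((∑ i ∈ T, z i) e ≠ 0) ↔
        ¬ ((D.src e ∈ (some '' (↑T : Set (Fin n)))) ↔ (D.tgt e ∈ (some '' (↑T : Set (Fin n))))) := by
    intro T e
    rw [hsum_eval]
    have hXs : ∀ i : Fin n, (some i ∈ (some '' (↑T : Set (Fin n)))) ↔ i ∈ T := by
      intro i; simp
    have hXn : (none ∈ (some '' (↑T : Set (Fin n)))) = False := by simp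
    by_cases h1 : (faces e).Nonempty
    · by_cases h2 : 2 ≤ (faces e).card
      · set a := (faces e).min' h1 with ha
        set bb := (faces e).max' (Finset.card_pos.1 (by omega)) with hbb
        have hsrc : D.src e = some a := by
          show (if h : (faces e).Nonempty then some ((faces e).min' h) else none) = some a
          rw [dif_pos h1]
        have htgt : D.tgt e = some bb := by
          show (if h : 2 ≤ (faces e).card then
            some ((faces e).max' (Finset.card_pos.1 (by omega))) else none) = some bb
          rw [dif_pos h2]
        have hab : a ≠ bb := by
          intro h
          have hsub : faces e ⊆ {a} := by
            intro i hi
            have l1 := Finset.min'_le (faces e) i hi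
            have l2 := Finset.le_max' (faces e) i hi
            simp only [Finset.mem_singleton]
            apply le_antisymm
            · rw [h]; exact l2
            · exact l1
          have := Finset.card_le_card hsub
          simp only [Finset.card_singleton] at this
          omega
        have hbbmax : bb = (faces e).max' h1 := rfl
        have hfaces_eq : faces e = {a, bb} := by
          apply Finset.Subset.antisymm
          · intro i hi
            rcases finset_mem_minmax (faces e) h1 (hfcard e) i hi with h | h
            · simp [ha ▸ h]
            · simp [hbbmax ▸ h]
          · intro i hi
            simp only [Finset.mem_insert, Finset.mem_singleton] at hi
            rcases hi with rfl | rfl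
            · exact Finset.min'_mem _ _
            · rw [hbbmax]; exact Finset.max'_mem _ _
        rw [hsrc, htgt, hfaces_eq]
        by_cases haT : a ∈ T <;> by_cases hbT : bb ∈ T
        · have hin : T ∩ {a, bb} = {a, bb} := by
            ext x
            simp only [Finset.mem_inter, Finset.mem_insert, Finset.mem_singleton]
            constructor
            · tauto
            · rintro (rfl | rfl) <;> simp [haT, hbT]
          rw [hin, Finset.card_insert_of_notMem (by simp [hab]), Finset.card_singleton]
          simp [hXs, haT, hbT]
          decide
        · have hin : T ∩ {a, bb} = {a} := by
            ext x
            simp only [Finset.mem_inter, Finset.mem_insert, Finset.mem_singleton]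
            constructor
            · rintro ⟨hx, rfl | rfl⟩
              · rfl
              · exact absurd hx hbT
            · rintro rfl
              exact ⟨haT, Or.inl rfl⟩
          rw [hin, Finset.card_singleton]
          simp [hXs, haT, hbT, hcast1]
        · have hin : T ∩ {a, bb} = {bb} := by
            ext x
            simp only [Finset.mem_inter, Finset.mem_insert, Finset.mem_singleton]
            constructor
            · rintro ⟨hx, rfl | rfl⟩
              · exact absurd hx haT
              · rfl
            · rintro rfl
              exact ⟨hbT, Or.inr rfl⟩
          rw [hin, Finset.card_singleton]
          simp [hXs, haT, hbT, hcast1]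
        · have hin : T ∩ {a, bb} = ∅ := by
            ext x
            simp only [Finset.mem_inter, Finset.mem_insert, Finset.mem_singleton,
              Finset.notMem_empty, iff_false, not_and]
            rintro hx (rfl | rfl)
            · exact haT hx
            · exact hbT hx
          rw [hin, Finset.card_empty]
          simp [hXs, haT, hbT, hcast0]
      · -- card = 1
        set a := (faces e).min' h1 with ha
        have hsrc : D.src e = some a := by
          show (if h : (faces e).Nonempty then some ((faces e).min' h) else none) = some a
          rw [dif_pos h1]
        have htgt : D.tgt e = none := by
          show (if h : 2 ≤ (faces e).card then
            some ((faces e).max' (Finset.card_pos.1 (by omega))) else none) = none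
          rw [dif_neg h2]
        have hfaces_eq : faces e = {a} := by
          apply Finset.Subset.antisymm
          · intro i hi
            have hmm := min_eq_max_of_card_le_one (faces e) h1 (by omega)
            rcases finset_mem_minmax (faces e) h1 (hfcard e) i hi with h | h
            · simp [ha ▸ h]
            · rw [← hmm] at h
              simp [ha ▸ h]
          · intro i hi
            simp only [Finset.mem_singleton] at hi
            subst hi
            exact Finset.min'_mem _ _
        rw [hsrc, htgt, hfaces_eq]
        by_cases haT : a ∈ T
        · have hin : T ∩ {a} = {a} := by
            ext x
            simp only [Finset.mem_inter, Finset.mem_singleton]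
            constructor
            · tauto
            · rintro rfl; exact ⟨haT, rfl⟩
          rw [hin, Finset.card_singleton]
          simp [hXs, hXn, haT, hcast1]
        · have hin : T ∩ {a} = ∅ := by
            ext x
            simp only [Finset.mem_inter, Finset.mem_singleton, Finset.notMem_empty,
              iff_false, not_and]
            rintro hx rfl
            exact haT hx
          rw [hin, Finset.card_empty]
          simp [hXs, hXn, haT, hcast0]
    · -- no faces
      have hfe : faces e = ∅ := Finset.not_nonempty_iff_eq_empty.1 h1
      have hsrc : D.src e = none := by
        show (if h : (faces e).Nonempty then some ((faces e).min' h) else none) = none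
        rw [dif_neg h1]
      have htgt : D.tgt e = none := by
        show (if h : 2 ≤ (faces e).card then
          some ((faces e).max' (Finset.card_pos.1 (by omega))) else none) = none
        rw [dif_neg (by rw [hfe]; simp)]
      rw [hsrc, htgt, hfe]
      simp [hXn, hcast0]
  -- nonzero sums over nonempty T
  have hTne_zero : ∀ T : Finset (Fin n), T.Nonempty → (∑ i ∈ T, z i) ≠ 0 := by
    intro T hT h0
    have hcoe : ((∑ i ∈ T, b i : cycleSpace G) : E → ZMod 2) = ∑ i ∈ T, z i := by
      have hm := map_sum (cycleSpace G).subtype (fun i => (b i : cycleSpace G)) T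
      simp only [Submodule.coe_subtype] at hm
      rw [hm]
      apply Finset.sum_congr rfl
      intro i _
      exact (hbc i).2
    have hsum0 : (∑ i ∈ T, b i : cycleSpace G) = 0 := by
      apply Subtype.ext
      rw [hcoe, h0]
      rfl
    obtain ⟨i0, hi0⟩ := hT
    have hli := b.linearIndependent
    rw [linearIndependent_iff'] at hli
    have := hli T (fun _ => 1) (by simpa [one_smul] using hsum0) i0 hi0
    exact one_ne_zero this
  -- decomposition of cycle space elements
  have hdecomp : ∀ x : E → ZMod 2, x ∈ cycleSpace G →
      ∃ T : Finset (Fin n), x = ∑ i ∈ T, z i := by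
    intro x hx
    have hrepr := b.sum_repr ⟨x, hx⟩
    set r : Fin n → ZMod 2 := fun i => b.repr ⟨x, hx⟩ i with hr
    refine ⟨Finset.univ.filter (fun i => r i ≠ 0), ?_⟩
    have hcoe : x = ∑ i : Fin n, r i • z i := by
      have h2 := congrArg (fun v : cycleSpace G => (v : E → ZMod 2)) hrepr
      simp only at h2
      rw [← h2]
      have hm := map_sum (cycleSpace G).subtype (fun i => r i • b i) Finset.univ
      simp only [Submodule.coe_subtype] at hm
      rw [hm]
      apply Finset.sum_congr rfl
      intro i _
      rw [Submodule.coe_smul, (hbc i).2]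
    rw [hcoe]
    rw [← Finset.sum_filter_of_ne (p := fun i => r i ≠ 0) (by
      intro i _ hne hri
      apply hne
      rw [hri, zero_smul])]
    apply Finset.sum_congr rfl
    intro i hi
    simp only [Finset.mem_filter] at hi
    have : r i = 1 := by
      rcases (by decide : ∀ a : ZMod 2, a = 0 ∨ a = 1) (r i) with h | h
      · exact absurd h hi.2
      · exact h
    rw [this, one_smul]
  -- support of chain2
  have hsupp_chain2 : ∀ w : List (Dart E), Multigraph.edges w = {e | chain2 w e ≠ 0} := by
    intro w
    ext e
    simp only [Set.mem_setOf_eq, chain2]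
    by_cases h : e ∈ Multigraph.edges w
    · simp [h]
    · simp [h]
  have hchain2_ne : ∀ w : List (Dart E), w ≠ [] → chain2 w ≠ 0 := by
    intro w hw h0
    obtain ⟨d, hd⟩ := List.exists_mem_of_ne_nil w hw
    have hmem : d.1 ∈ Multigraph.edges w := ⟨d.2, by simpa using hd⟩
    have h1 : chain2 w d.1 = 1 := by
      simp only [chain2]
      rw [if_pos hmem]
    rw [h0] at h1
    exact one_ne_zero h1.symm
  -- edge cuts from nonempty T
  have hedgecut : ∀ T : Finset (Fin n), T.Nonempty →
      IsEdgeCut D {e | (∑ i ∈ T, z i) e ≠ 0} := by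
    intro T hT
    obtain ⟨i0, hi0⟩ := hT
    show ¬ (D.restrict {e | (∑ i ∈ T, z i) e ≠ 0}ᶜ).Conn
    apply Multigraph.not_conn_of_cut (X := {o | o ∈ (some '' (↑T : Set (Fin n)))})
      (u := some i0) (v := none)
    · exact ⟨i0, hi0, rfl⟩
    · simp
    · rintro ⟨⟨e, he⟩, bb⟩
      have hiff : D.src e ∈ (some '' (↑T : Set (Fin n))) ↔
          D.tgt e ∈ (some '' (↑T : Set (Fin n))) := by
        have h0 : ¬ ((∑ i ∈ T, z i) e ≠ 0) := he
        rw [hcross T e] at h0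
        exact not_not.1 h0
      cases bb
      · simpa [Multigraph.dsrc, Multigraph.dtgt, Multigraph.restrict] using hiff.symm
      · simpa [Multigraph.dsrc, Multigraph.dtgt, Multigraph.restrict] using hiff
  -- from edge cuts to nonempty T
  have hcut_to_T : ∀ S : Set E, IsEdgeCut D S →
      ∃ T : Finset (Fin n), T.Nonempty ∧ ∀ e, (∑ i ∈ T, z i) e ≠ 0 → e ∈ S := by
    intro S hScut
    obtain ⟨X, u, v, hu, hv, hX⟩ := Multigraph.exists_cut_set (D.restrict Sᶜ) hScut
    have hcrossing : ∀ e, e ∉ S → (D.src e ∈ X ↔ D.tgt e ∈ X) := by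
      intro e he
      have h1 := hX ⟨⟨e, he⟩, true⟩
      simpa [Multigraph.dsrc, Multigraph.dtgt, Multigraph.restrict] using h1
    by_cases hnX : none ∈ X
    · have hvne : v ≠ none := fun h => hv (h ▸ hnX)
      obtain ⟨i0, hi0⟩ := Option.ne_none_iff_exists'.1 hvne
      set T : Finset (Fin n) := Finset.univ.filter (fun i => some i ∉ X) with hT
      have hXsXc : ∀ o : Option (Fin n), o ∈ (some '' (↑T : Set (Fin n))) ↔ o ∉ X := by
        intro o
        cases o with
        | none =>
          simp only [Set.mem_image]
          constructor
          · rintro ⟨i, _, h⟩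
            exact absurd h (by simp)
          · intro h
            exact absurd hnX h
        | some i =>
          simp only [Set.mem_image, hT]
          constructor
          · rintro ⟨j, hj, hje⟩
            obtain rfl : j = i := by injection hje
            simpa using hj
          · intro h
            exact ⟨i, by simpa using h, rfl⟩
      refine ⟨T, ⟨i0, by simp [hT, ← hi0, hv]⟩, ?_⟩
      intro e he
      by_contra heS
      have h2 := (hcross T e).1 he
      apply h2
      rw [hXsXc, hXsXc]
      have h3 := hcrossing e heS
      tauto
    · have hune : u ≠ none := fun h => hnX (h ▸ hu)
      obtain ⟨i0, hi0⟩ := Option.ne_none_iff_exists'.1 hune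
      set T : Finset (Fin n) := Finset.univ.filter (fun i => some i ∈ X) with hT
      have hXsXc : ∀ o : Option (Fin n), o ∈ (some '' (↑T : Set (Fin n))) ↔ o ∈ X := by
        intro o
        cases o with
        | none =>
          simp only [Set.mem_image]
          constructor
          · rintro ⟨i, _, h⟩
            exact absurd h (by simp)
          · intro h
            exact absurd h hnX
        | some i =>
          simp only [Set.mem_image, hT]
          constructor
          · rintro ⟨j, hj, hje⟩
            obtain rfl : j = i := by injection hje
            simpa using hj
          · intro h
            exact ⟨i, by simpa using h, rfl⟩
      refine ⟨T, ⟨i0, by simp [hT, ← hi0, hu]⟩, ?_⟩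
      intro e he
      by_contra heS
      have h2 := (hcross T e).1 he
      apply h2
      rw [hXsXc, hXsXc]
      exact hcrossing e heS
  -- final equivalence
  intro S
  constructor
  · rintro ⟨w, hw, rfl⟩
    have hmem : chain2 w ∈ cycleSpace G := Submodule.subset_span ⟨w, hw, rfl⟩
    obtain ⟨T, hTeq⟩ := hdecomp _ hmem
    have hTne : T.Nonempty := by
      rcases Finset.eq_empty_or_nonempty T with rfl | h
      · exfalso
        apply hchain2_ne w hw.1.1
        rw [hTeq, Finset.sum_empty]
      · exact h
    have hSsupp : Multigraph.edges w = {e | (∑ i ∈ T, z i) e ≠ 0} := by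
      rw [hsupp_chain2 w]
      ext e
      simp only [Set.mem_setOf_eq]
      rw [hTeq]
    constructor
    · rw [hSsupp]
      exact hedgecut T hTne
    · intro S' hS' hS'cut
      obtain ⟨T', hT'ne, hT'sub⟩ := hcut_to_T S' hS'cut
      have hx' : (∑ i ∈ T', z i) ∈ cycleSpace G := Submodule.sum_mem _ (fun i _ => hzmem i)
      obtain ⟨w'', hw'', hw''sub⟩ := G.exists_cycle_of_even _ (G.bnd2_zero_of_mem _ hx')
        (hTne_zero T' hT'ne)
      have h1 : Multigraph.edges w'' ⊆ Multigraph.edges w := by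
        intro e he2
        exact hS'.subset (hT'sub e (hw''sub he2))
      have h2 := G.cycle_edges_eq_of_subset hw hw'' h1
      have h3 : Multigraph.edges w ⊆ S' := by
        rw [← h2]
        intro e he2
        exact hT'sub e (hw''sub he2)
      exact hS'.not_subset h3
  · rintro ⟨hScut, hSmin⟩
    obtain ⟨T, hTne, hTsub⟩ := hcut_to_T S hScut
    have hx : (∑ i ∈ T, z i) ∈ cycleSpace G := Submodule.sum_mem _ (fun i _ => hzmem i)
    obtain ⟨w', hw', hw'sub⟩ := G.exists_cycle_of_even _ (G.bnd2_zero_of_mem _ hx)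
      (hTne_zero T hTne)
    have hsubS : Multigraph.edges w' ⊆ S := fun e he => hTsub e (hw'sub he)
    have heq : Multigraph.edges w' = S := by
      by_contra hne2
      have hss : Multigraph.edges w' ⊂ S :=
        ⟨hsubS, fun h => hne2 (Set.Subset.antisymm hsubS h)⟩
      have hmem' : chain2 w' ∈ cycleSpace G := Submodule.subset_span ⟨w', hw', rfl⟩
      obtain ⟨T'', hT''eq⟩ := hdecomp _ hmem'
      have hT''ne : T''.Nonempty := by
        rcases Finset.eq_empty_or_nonempty T'' with rfl | h
        · exfalso
          apply hchain2_ne w' hw'.1.1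
          rw [hT''eq, Finset.sum_empty]
        · exact h
      have hEcut := hedgecut T'' hT''ne
      have hEeq : {e | (∑ i ∈ T'', z i) e ≠ 0} = Multigraph.edges w' := by
        rw [hsupp_chain2 w']
        ext e
        simp only [Set.mem_setOf_eq]
        rw [hT''eq]
      rw [hEeq] at hEcut
      exact hSmin _ hss hEcut
    exact ⟨w', hw', heq⟩



lemma equiv_image_symm_image {α β : Type} (e : α ≃ β) (s : Set β) :
    e '' (e.symm '' s) = s := by
  ext x
  simp

lemma equiv_trans_image {α β γ : Type} (e : α ≃ β) (f : β ≃ γ) (s : Set α) :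
    (e.trans f) '' s = f '' (e '' s) := by
  rw [show ((e.trans f : α ≃ γ) : α → γ) = (f : β → γ) ∘ (e : α → β) from rfl, Set.image_comp]

/-- two planar graphs are 2-isomorphic iff they have the same set of abstract
duals. -/
theorem stmt6 {V E V' E' : Type} [Fintype V] [Fintype E] [Fintype V'] [Fintype E']
    (G : Multigraph V E) (H : Multigraph V' E')
    (hG : IsPlanarMacLane G) (hH : IsPlanarMacLane H) :
    TwoIsomorphic G H ↔
      ∀ (W F : Type) (D : Multigraph W F), IsAbstractDual G D ↔ IsAbstractDual H D := by
  constructor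
  · rintro ⟨φ, hφ⟩ W F D
    constructor
    · rintro ⟨ψ, hψ⟩
      refine ⟨φ.symm.trans ψ, ?_⟩
      intro S'
      have h1 : IsCycleSet H S' ↔ IsCycleSet G (φ.symm '' S') := by
        rw [hφ (φ.symm '' S'), equiv_image_symm_image]
      rw [h1, hψ (φ.symm '' S'), equiv_trans_image]
    · rintro ⟨ψ, hψ⟩
      refine ⟨φ.trans ψ, ?_⟩
      intro S
      rw [hφ S, hψ (φ '' S), equiv_trans_image]
  · intro hdual
    obtain ⟨n, D, hD⟩ := exists_abstract_dual G hG
    have hGD : IsAbstractDual G D := by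
      refine ⟨Equiv.refl E, ?_⟩
      intro S
      have : (Equiv.refl E) '' S = S := by simp
      rw [this]
      exact hD S
    obtain ⟨ψH, hψH⟩ := (hdual _ _ D).1 hGD
    obtain ⟨ψG, hψG⟩ := hGD
    refine ⟨ψG.trans ψH.symm, ?_⟩
    intro S
    rw [hψG S, hψH (ψG.trans ψH.symm '' S)]
    have himg : ψH '' ((ψG.trans ψH.symm) '' S) = ψG '' S := by
      rw [equiv_trans_image]
      exact equiv_image_symm_image ψH (ψG '' S)
    rw [himg]
end

section
/- For a finite sum f(t) = sum_{j=1}^k nu_j cos(mu_j t) with nu_k nonzero and 0 < mu_1 < ... < mu_k, the top frequency is recovered from the derivatives at 0: lambda = mu_k^2 is the unique positive real such that the limit of f^{(2n)}(0)/(-lambda)^n as n tends to infinity exists, is finite, and is nonzero; moreover this limit equals nu_k. -/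
open Filter Topology

lemma hasDerivAt_sum_cos {k : ℕ} (a b : Fin k → ℝ) (t : ℝ) :
    HasDerivAt (fun t => ∑ j, a j * Real.cos (b j * t))
      (∑ j, -(a j * b j) * Real.sin (b j * t)) t := by
  apply HasDerivAt.fun_sum
  intro j _
  have h1 : HasDerivAt (fun t : ℝ => b j * t) (b j) t := by
    simpa using (hasDerivAt_id t).const_mul (b j)
  have h2 := ((Real.hasDerivAt_cos (b j * t)).comp t h1).const_mul (a j)
  convert h2 using 1
  · rfl
  · rfl
  ring

lemma hasDerivAt_sum_sin {k : ℕ} (a b : Fin k → ℝ) (t : ℝ) :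
    HasDerivAt (fun t => ∑ j, a j * Real.sin (b j * t))
      (∑ j, (a j * b j) * Real.cos (b j * t)) t := by
  apply HasDerivAt.fun_sum
  intro j _
  have h1 : HasDerivAt (fun t : ℝ => b j * t) (b j) t := by
    simpa using (hasDerivAt_id t).const_mul (b j)
  have h2 := ((Real.hasDerivAt_sin (b j * t)).comp t h1).const_mul (a j)
  convert h2 using 1
  · rfl
  · rfl
  ring

lemma iteratedDeriv_sum_cos {k : ℕ} (a b : Fin k → ℝ) (n : ℕ) :
    iteratedDeriv (2 * n) (fun t => ∑ j, a j * Real.cos (b j * t)) =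
      fun t => ∑ j, ((-1) ^ n * a j * (b j) ^ (2 * n)) * Real.cos (b j * t) := by
  induction n with
  | zero => simp
  | succ n ih =>
    have e : 2 * (n + 1) = (2 * n + 1) + 1 := by ring
    rw [e, iteratedDeriv_succ, iteratedDeriv_succ, ih]
    have hd1 : deriv (fun t => ∑ j, ((-1:ℝ) ^ n * a j * (b j) ^ (2 * n)) * Real.cos (b j * t))
        = fun t => ∑ j, -(((-1:ℝ) ^ n * a j * (b j) ^ (2 * n)) * b j) * Real.sin (b j * t) :=
      funext fun t => (hasDerivAt_sum_cos _ _ t).deriv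
    rw [hd1]
    funext t
    have hd2 := (hasDerivAt_sum_sin (fun j => -(((-1:ℝ) ^ n * a j * (b j) ^ (2 * n)) * b j)) b t).deriv
    rw [hd2]
    apply Finset.sum_congr rfl
    intro j _
    ring

lemma aux_tendsto {k : ℕ} (ν q : Fin k → ℝ) (last : Fin k)
    (hq1 : q last = 1) (hq : ∀ j, j ≠ last → |q j| < 1) :
    Tendsto (fun n : ℕ => ∑ j, ν j * q j ^ n) atTop (𝓝 (ν last)) := by
  have h : Tendsto (fun n : ℕ => ∑ j, ν j * q j ^ n) atTop
      (𝓝 (∑ j, if j = last then ν last else 0)) := by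
    apply tendsto_finset_sum
    intro j _
    by_cases h : j = last
    · subst h; simp [hq1]
    · simp only [h, if_false]
      have := tendsto_pow_atTop_nhds_zero_of_abs_lt_one (hq j h)
      simpa using tendsto_const_nhds.mul this
  simpa using h

lemma ratio_div (n : ℕ) (c lam m : ℝ) (hlam : lam ≠ 0) :
    ((-1:ℝ) ^ n * c * m ^ (2 * n)) / (-lam) ^ n = c * (m ^ 2 / lam) ^ n := by
  rw [neg_pow lam n, pow_mul, div_pow]
  have h : ((-1:ℝ) ^ n) ≠ 0 := by positivity
  field_simp

/-- for `f(t) = ∑ ν_j cos(μ_j t)` with `ν_k ≠ 0` and `0 < μ_1 < ... < μ_k`,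
`λ = μ_k²` is the unique positive real such that `f^{(2n)}(0)/(-λ)^n` converges to a
finite nonzero limit, and for `λ = μ_k²` the limit equals `ν_k`. -/
theorem stmt8 (k : ℕ) (hk : 0 < k) (ν μ : Fin k → ℝ)
    (hν : ν ⟨k - 1, Nat.sub_lt hk one_pos⟩ ≠ 0)
    (hμ : StrictMono μ) (hpos : ∀ j, 0 < μ j)
    (f : ℝ → ℝ) (hf : f = fun t => ∑ j, ν j * Real.cos (μ j * t)) :
    (∀ lam : ℝ, 0 < lam →
      ((∃ c : ℝ, c ≠ 0 ∧
          Tendsto (fun n : ℕ => iteratedDeriv (2 * n) f 0 / (-lam) ^ n) atTop (𝓝 c))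
        ↔ lam = (μ ⟨k - 1, Nat.sub_lt hk one_pos⟩) ^ 2)) ∧
    Tendsto
      (fun n : ℕ => iteratedDeriv (2 * n) f 0 / (-(μ ⟨k - 1, Nat.sub_lt hk one_pos⟩) ^ 2) ^ n)
      atTop (𝓝 (ν ⟨k - 1, Nat.sub_lt hk one_pos⟩)) := by
  set last : Fin k := ⟨k - 1, Nat.sub_lt hk one_pos⟩ with hlast
  have hlt : ∀ j : Fin k, j ≠ last → μ j < μ last := by
    intro j hj
    apply hμ
    have : j.val ≤ k - 1 := Nat.le_sub_one_of_lt j.isLt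
    have hne : j.val ≠ k - 1 := fun h => hj (Fin.ext h)
    exact Fin.lt_def.mpr (lt_of_le_of_ne this hne)
  -- the key formula for the ratio sequence
  have hform : ∀ lam : ℝ, lam ≠ 0 → ∀ n : ℕ,
      iteratedDeriv (2 * n) f 0 / (-lam) ^ n = ∑ j, ν j * ((μ j) ^ 2 / lam) ^ n := by
    intro lam hlam n
    rw [hf, iteratedDeriv_sum_cos]
    simp only [mul_zero, Real.cos_zero, mul_one]
    rw [Finset.sum_div]
    exact Finset.sum_congr rfl fun j _ => ratio_div n (ν j) lam (μ j) hlam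
  have hμlast : 0 < μ last := hpos last
  have hsq : (0:ℝ) < (μ last) ^ 2 := by positivity
  -- the limit for lam = μ_last ^ 2
  have hmain : Tendsto (fun n : ℕ => iteratedDeriv (2 * n) f 0 / (-((μ last) ^ 2)) ^ n)
      atTop (𝓝 (ν last)) := by
    have he : (fun n : ℕ => iteratedDeriv (2 * n) f 0 / (-((μ last) ^ 2)) ^ n)
        = fun n : ℕ => ∑ j, ν j * ((μ j) ^ 2 / (μ last) ^ 2) ^ n :=
      funext fun n => hform _ (ne_of_gt hsq) n
    rw [he]
    apply aux_tendsto ν _ last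
    · exact div_self (ne_of_gt hsq)
    · intro j hj
      have hj0 := hpos j
      have h1 : 0 < (μ j) ^ 2 / (μ last) ^ 2 := by positivity
      rw [abs_of_pos h1]
      rw [div_lt_one hsq]
      exact pow_lt_pow_left₀ (hlt j hj) (le_of_lt (hpos j)) (by norm_num)
  refine ⟨?_, hmain⟩
  intro lam hlam
  constructor
  · rintro ⟨c, hc, htc⟩
    by_contra hne
    rcases lt_or_gt_of_ne hne with hls | hgt
    · -- lam < μ_last ^ 2 : divergence contradiction
      have he : (fun n : ℕ => (iteratedDeriv (2 * n) f 0 / (-lam) ^ n) * (lam / (μ last) ^ 2) ^ n)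
          = fun n : ℕ => ∑ j, ν j * ((μ j) ^ 2 / (μ last) ^ 2) ^ n := by
        funext n
        rw [hform lam (ne_of_gt hlam) n, Finset.sum_mul]
        apply Finset.sum_congr rfl
        intro j _
        rw [mul_assoc, ← mul_pow]
        congr 2
        field_simp
      have hr : |lam / (μ last) ^ 2| < 1 := by
        rw [abs_of_pos (by positivity), div_lt_one hsq]; exact hls
      have h0 : Tendsto (fun n : ℕ => (iteratedDeriv (2 * n) f 0 / (-lam) ^ n) * (lam / (μ last) ^ 2) ^ n)
          atTop (𝓝 (c * 0)) :=
        htc.mul (tendsto_pow_atTop_nhds_zero_of_abs_lt_one hr)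
      rw [he] at h0
      have h1 : Tendsto (fun n : ℕ => ∑ j, ν j * ((μ j) ^ 2 / (μ last) ^ 2) ^ n)
          atTop (𝓝 (ν last)) := by
        have he2 : (fun n : ℕ => iteratedDeriv (2 * n) f 0 / (-((μ last) ^ 2)) ^ n)
            = fun n : ℕ => ∑ j, ν j * ((μ j) ^ 2 / (μ last) ^ 2) ^ n :=
          funext fun n => hform _ (ne_of_gt hsq) n
        rwa [he2] at hmain
      have := tendsto_nhds_unique h0 h1
      rw [mul_zero] at this
      exact hν this.symm
    · -- lam > μ_last ^ 2 : limit is 0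
      have h0 : Tendsto (fun n : ℕ => iteratedDeriv (2 * n) f 0 / (-lam) ^ n) atTop (𝓝 0) := by
        have he : (fun n : ℕ => iteratedDeriv (2 * n) f 0 / (-lam) ^ n)
            = fun n : ℕ => ∑ j, ν j * ((μ j) ^ 2 / lam) ^ n :=
          funext fun n => hform lam (ne_of_gt hlam) n
        rw [he]
        have : Tendsto (fun n : ℕ => ∑ j, ν j * ((μ j) ^ 2 / lam) ^ n) atTop
            (𝓝 (∑ _j : Fin k, (0:ℝ))) := by
          apply tendsto_finset_sum
          intro j _
          have hjle : μ j ≤ μ last := by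
            by_cases h : j = last
            · rw [h]
            · exact le_of_lt (hlt j h)
          have hj0 := hpos j
          have habs : |(μ j) ^ 2 / lam| < 1 := by
            rw [abs_of_pos (by positivity), div_lt_one hlam]
            calc (μ j) ^ 2 ≤ (μ last) ^ 2 :=
                  pow_le_pow_left₀ (le_of_lt (hpos j)) hjle 2
              _ < lam := hgt
          simpa using tendsto_const_nhds.mul
            (tendsto_pow_atTop_nhds_zero_of_abs_lt_one habs)
        simpa using this
      exact hc (tendsto_nhds_unique htc h0)
  · rintro rfl
    exact ⟨ν last, hν, hmain⟩
end

section
/- In a metric graph, if a closed walk of minimal length in its homology class is not a cycle (i.e., it repeats a vertex), then its homology class mu can be written as mu = kappa + kappa' or mu = kappa - kappa' with kappa, kappa' nonzero homology classes whose minimal representative lengths satisfy l(kappa) + l(kappa') <= l(mu). -/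
open scoped Classical

open Multigraph

section Helpers

variable {V E : Type}

lemma myChain_append (x y : List (Dart E)) :
    Multigraph.chain (x ++ y) = Multigraph.chain x + Multigraph.chain y := by
  simp [Multigraph.chain]

lemma myWalkLength_append (l : E → ℝ) (x y : List (Dart E)) :
    walkLength l (x ++ y) = walkLength l x + walkLength l y := by
  simp [walkLength]

lemma myWalkLength_nonneg {l : E → ℝ} (hl : ∀ e, 0 ≤ l e) (w : List (Dart E)) :
    0 ≤ walkLength l w := by
  apply List.sum_nonneg
  rintro x hx
  simp only [List.mem_map] at hx
  obtain ⟨d, -, rfl⟩ := hx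
  exact hl _

lemma myWalkLength_pos {l : E → ℝ} (hl : ∀ e, 0 < l e) {w : List (Dart E)} (hw : w ≠ []) :
    0 < walkLength l w := by
  cases w with
  | nil => exact absurd rfl hw
  | cons d t =>
    have h1 : walkLength l (d :: t) = l d.1 + walkLength l t := by simp [walkLength]
    have h2 := myWalkLength_nonneg (fun e => (hl e).le) t
    rw [h1]
    linarith [hl d.1]

lemma myClosedWalk_concat {G : Multigraph V E} {d : Dart E} {t : List (Dart E)}
    (hw : G.IsClosedWalk (d :: t)) : G.IsClosedWalk (t ++ [d]) := by
  obtain ⟨-, hch, hcl⟩ := hw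
  cases t with
  | nil => exact ⟨by simp, List.isChain_singleton d, by simpa using hcl⟩
  | cons a t' =>
    rw [List.Chain', List.isChain_cons_cons] at hch
    refine ⟨by simp, ?_, ?_⟩
    · rw [List.Chain', List.isChain_append]
      refine ⟨hch.2, List.isChain_singleton d, ?_⟩
      intro x hx y hy
      simp only [List.head?_cons, Option.mem_def, Option.some.injEq] at hy
      subst hy
      exact hcl x (by rw [List.getLast?_cons_cons]; exact hx) d (by simp)
    · intro dl hdl dh hdh
      have h1 : ((a :: t') ++ [d]).getLast? = some d := List.getLast?_concat
      rw [h1] at hdl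
      simp only [Option.mem_def, Option.some.injEq] at hdl
      subst hdl
      simp only [List.cons_append, List.head?_cons, Option.mem_def, Option.some.injEq] at hdh
      subst hdh
      exact hch.1

lemma myClosedWalk_rotate {G : Multigraph V E} :
    ∀ (n : ℕ) {w : List (Dart E)}, G.IsClosedWalk w → G.IsClosedWalk (w.rotate n) := by
  intro n
  induction n with
  | zero => intro w hw; simpa using hw
  | succ n ih =>
    intro w hw
    cases w with
    | nil => exact absurd rfl hw.1
    | cons d t =>
      rw [List.rotate_cons_succ]
      exact ih (myClosedWalk_concat hw)

lemma myChain_rotate (w : List (Dart E)) (n : ℕ) :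
    Multigraph.chain (w.rotate n) = Multigraph.chain w :=
  List.Perm.sum_eq ((List.rotate_perm w n).map _)

lemma myWalkLength_rotate (l : E → ℝ) (w : List (Dart E)) (n : ℕ) :
    walkLength l (w.rotate n) = walkLength l w :=
  List.Perm.sum_eq ((List.rotate_perm w n).map _)

end Helpers

/-- if a minimal-length closed walk in a nonzero homology class `μ` is not a
cycle (it repeats a vertex), then `μ = κ + κ'` or `μ = κ - κ'` for nonzero homology
classes `κ, κ'` with `l(κ) + l(κ') ≤ l(μ)`. -/
theorem stmt14 {V E : Type} [Fintype V] [Fintype E] (G : Multigraph V E)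
    (l : E → ℝ) (hl : ∀ e, 0 < l e)
    (μ : E → ℤ) (hμ : μ ≠ 0)
    (w : List (Dart E)) (hw : G.IsClosedWalk w) (hwμ : Multigraph.chain w = μ)
    (hmin : ∀ w', G.IsClosedWalk w' → Multigraph.chain w' = μ →
      Multigraph.walkLength l w ≤ Multigraph.walkLength l w')
    (hnc : ¬ (w.map G.dsrc).Nodup) :
    ∃ κ κ' : E → ℤ, κ ≠ 0 ∧ κ' ≠ 0 ∧
      (∃ w1, G.IsClosedWalk w1 ∧ Multigraph.chain w1 = κ) ∧
      (∃ w2, G.IsClosedWalk w2 ∧ Multigraph.chain w2 = κ') ∧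
      (μ = κ + κ' ∨ μ = κ - κ') ∧
      G.minLen l κ + G.minLen l κ' ≤ G.minLen l μ := by
  -- Extract two indices with the same source vertex
  have hdup : ∃ i j, ∃ (hi : i < w.length) (hj : j < w.length), i < j ∧
      G.dsrc (w[i]'hi) = G.dsrc (w[j]'hj) := by
    rw [List.nodup_iff_injective_get] at hnc
    simp only [Function.Injective, not_forall] at hnc
    obtain ⟨a, b, hab, hne⟩ := hnc
    have hla : (a : ℕ) < w.length := by have := a.isLt; simpa using this
    have hlb : (b : ℕ) < w.length := by have := b.isLt; simpa using this
    simp only [List.get_eq_getElem, List.getElem_map] at hab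
    rcases lt_or_gt_of_ne (fun h => hne (Fin.ext h) : (a : ℕ) ≠ (b : ℕ)) with h | h
    · exact ⟨a, b, hla, hlb, h, hab⟩
    · exact ⟨b, a, hlb, hla, h, hab.symm⟩
  obtain ⟨i, j, hi, hj, hij, hsrc⟩ := hdup
  set w' := w.rotate i with hw'def
  have hw' : G.IsClosedWalk w' := myClosedWalk_rotate i hw
  have hlen' : w'.length = w.length := List.length_rotate w i
  set m := j - i with hmdef
  have hm0 : 0 < m := Nat.sub_pos_of_lt hij
  have hmlt : m < w'.length := by omega
  have h0lt : 0 < w'.length := by omega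
  -- the two equal sources in w'
  have hget0 : w'[0]'h0lt = w[i]'hi := by
    have := List.get_rotate w i ⟨0, h0lt⟩
    simp only [List.get_eq_getElem] at this
    rw [this]
    congr 1
    simp [Nat.mod_eq_of_lt hi]
  have hgetm : w'[m]'hmlt = w[j]'hj := by
    have := List.get_rotate w i ⟨m, hmlt⟩
    simp only [List.get_eq_getElem] at this
    rw [this]
    congr 1
    have : m + i = j := by omega
    simp [this, Nat.mod_eq_of_lt hj]
  have hsrc' : G.dsrc (w'[0]'h0lt) = G.dsrc (w'[m]'hmlt) := by
    rw [hget0, hgetm]; exact hsrc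
  -- split w' = b ++ c
  set b := w'.take m with hbdef
  set c := w'.drop m with hcdef
  have hsplit : b ++ c = w' := List.take_append_drop m w'
  have hb_ne : b ≠ [] := by
    apply List.ne_nil_of_length_pos
    rw [hbdef, List.length_take]
    omega
  have hc_ne : c ≠ [] := by
    apply List.ne_nil_of_length_pos
    rw [hcdef, List.length_drop]
    omega
  -- head/last facts
  have hbh : b.head? = some (w'[0]'h0lt) := by
    rw [hbdef, List.head?_take, if_neg (by omega : m ≠ 0), List.head?_eq_getElem?,
      List.getElem?_eq_getElem h0lt]
  have hch : c.head? = some (w'[m]'hmlt) := by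
    rw [hcdef, List.head?_drop, List.getElem?_eq_getElem hmlt]
  have hclast : c.getLast? = w'.getLast? := by
    conv_rhs => rw [← hsplit]
    exact (List.getLast?_append_of_ne_nil b hc_ne).symm
  have hwch : List.Chain' (fun d d' => G.dtgt d = G.dsrc d') (b ++ c) := by
    rw [hsplit]; exact hw'.2.1
  rw [List.Chain', List.isChain_append] at hwch
  obtain ⟨hcb, hcc, hcon⟩ := hwch
  -- b is a closed walk
  have hbCW : G.IsClosedWalk b := by
    refine ⟨hb_ne, hcb, ?_⟩
    intro dl hdl dh hdh
    have h1 : G.dtgt dl = G.dsrc (w'[m]'hmlt) :=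
      hcon dl hdl _ (by rw [hch]; rfl)
    rw [hbh] at hdh
    simp only [Option.mem_def, Option.some.injEq] at hdh
    subst hdh
    rw [h1, ← hsrc']
  -- c is a closed walk
  have hcCW : G.IsClosedWalk c := by
    refine ⟨hc_ne, hcc, ?_⟩
    intro dl hdl dh hdh
    have h1 : G.dtgt dl = G.dsrc (w'[0]'h0lt) := by
      have := hw'.2.2 dl (by rw [← hclast]; exact hdl)
      have hh : w'.head? = some (w'[0]'h0lt) := by
        rw [List.head?_eq_getElem?, List.getElem?_eq_getElem h0lt]
      exact this _ (by rw [hh]; rfl)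
    rw [hch] at hdh
    simp only [Option.mem_def, Option.some.injEq] at hdh
    subst hdh
    rw [h1, hsrc']
  -- chains and lengths
  have hchain' : Multigraph.chain w' = μ := by rw [hw'def, myChain_rotate, hwμ]
  have hchsum : Multigraph.chain b + Multigraph.chain c = μ := by
    rw [← myChain_append, hsplit, hchain']
  have hlensum : walkLength l b + walkLength l c = walkLength l w := by
    rw [← myWalkLength_append, hsplit, hw'def, myWalkLength_rotate]
  have hbpos : 0 < walkLength l b := myWalkLength_pos hl hb_ne
  have hcpos : 0 < walkLength l c := myWalkLength_pos hl hc_ne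
  set κ := Multigraph.chain b with hκ
  set κ' := Multigraph.chain c with hκ'
  have hκne : κ ≠ 0 := by
    intro h0
    have hcμ : Multigraph.chain c = μ := by rw [← hchsum, h0, zero_add]
    have := hmin c hcCW hcμ
    linarith
  have hκ'ne : κ' ≠ 0 := by
    intro h0
    have hbμ : Multigraph.chain b = μ := by rw [← hchsum, h0, add_zero]
    have := hmin b hbCW hbμ
    linarith
  refine ⟨κ, κ', hκne, hκ'ne, ⟨b, hbCW, rfl⟩, ⟨c, hcCW, rfl⟩, Or.inl hchsum.symm, ?_⟩
  -- minLen estimates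
  have hbdd : ∀ (h : E → ℤ), BddBelow {x | ∃ w0, G.IsClosedWalk w0 ∧
      Multigraph.chain w0 = h ∧ walkLength l w0 = x} := by
    intro h
    refine ⟨0, ?_⟩
    rintro x ⟨w0, -, -, rfl⟩
    exact myWalkLength_nonneg (fun e => (hl e).le) w0
  have h1 : G.minLen l κ ≤ walkLength l b :=
    csInf_le (hbdd κ) ⟨b, hbCW, rfl, rfl⟩
  have h2 : G.minLen l κ' ≤ walkLength l c :=
    csInf_le (hbdd κ') ⟨c, hcCW, rfl, rfl⟩
  have h3 : walkLength l w ≤ G.minLen l μ := by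
    have hne : {x | ∃ w0, G.IsClosedWalk w0 ∧ Multigraph.chain w0 = μ ∧
        walkLength l w0 = x}.Nonempty := ⟨walkLength l w, w, hw, hwμ, rfl⟩
    apply le_csInf hne
    rintro x ⟨w0, hw0, hw0μ, rfl⟩
    exact hmin w0 hw0 hw0μ
  linarith
end

section
/- Conversely, if a nonzero homology class mu of a metric graph decomposes as mu = kappa + kappa' (or kappa - kappa') with kappa, kappa' nonzero and l(kappa) + l(kappa') <= l(mu), then no minimal-length closed walk representing mu is a cycle. -/
open scoped Classical

open Multigraph

namespace Multigraph

variable {V E : Type}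

lemma chain_nil' : chain ([] : List (Dart E)) = 0 := rfl

lemma chain_cons' (d : Dart E) (w : List (Dart E)) :
    chain (d :: w) = dartChain d + chain w := by
  simp [chain]

lemma chain_eq_zero' {w : List (Dart E)} {e : E} (h : ∀ d ∈ w, d.1 ≠ e) :
    chain w e = 0 := by
  induction w with
  | nil => rfl
  | cons d w ih =>
    have hd : dartChain d e = 0 := by
      simp [dartChain, h d (by simp)]
    rw [chain_cons', Pi.add_apply, hd, zero_add]
    exact ih fun d' hd' => h d' (by simp [hd'])

lemma abs_dartChain' (d : Dart E) (e : E) :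
    |dartChain d e| = if d.1 = e then 1 else 0 := by
  unfold dartChain
  split_ifs <;> simp

lemma sum_abs_dartChain' [Fintype E] (l : E → ℝ) (d : Dart E) :
    ∑ e, l e * (|dartChain d e| : ℝ) = l d.1 := by
  simp only [← Int.cast_abs]
  rw [Finset.sum_eq_single d.1]
  · rw [abs_dartChain', if_pos rfl]; simp
  · intro e _ he
    rw [abs_dartChain', if_neg (Ne.symm he)]; simp
  · intro h; exact absurd (Finset.mem_univ _) h

lemma sum_abs_le_walkLength' [Fintype E] (l : E → ℝ) (hl : ∀ e, 0 ≤ l e)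
    (w : List (Dart E)) :
    ∑ e, l e * (|chain w e| : ℝ) ≤ walkLength l w := by
  induction w with
  | nil => simp [chain_nil', walkLength]
  | cons d w ih =>
    have h1 : ∀ e ∈ Finset.univ, l e * (|chain (d :: w) e| : ℝ) ≤
        l e * (|dartChain d e| : ℝ) + l e * (|chain w e| : ℝ) := by
      intro e _
      rw [← mul_add]
      apply mul_le_mul_of_nonneg_left _ (hl e)
      rw [chain_cons', Pi.add_apply]
      push_cast
      exact abs_add_le _ _
    calc ∑ e, l e * (|chain (d :: w) e| : ℝ)
        ≤ ∑ e, (l e * (|dartChain d e| : ℝ) + l e * (|chain w e| : ℝ)) :=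
          Finset.sum_le_sum h1
      _ = l d.1 + ∑ e, l e * (|chain w e| : ℝ) := by
          rw [Finset.sum_add_distrib, sum_abs_dartChain']
      _ ≤ l d.1 + walkLength l w := by linarith
      _ = walkLength l (d :: w) := by simp [walkLength]

lemma walkLength_eq_of_nodup' [Fintype E] (l : E → ℝ) {w : List (Dart E)}
    (hnd : (w.map Prod.fst).Nodup) :
    walkLength l w = ∑ e, l e * (|chain w e| : ℝ) := by
  induction w with
  | nil => simp [walkLength, chain_nil']
  | cons d w ih =>
    rw [List.map_cons, List.nodup_cons] at hnd
    have h0 : chain w d.1 = 0 :=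
      chain_eq_zero' fun d' hd' h => hnd.1 (h ▸ List.mem_map_of_mem (f := Prod.fst) hd')
    have habs : ∀ e, |chain (d :: w) e| = |dartChain d e| + |chain w e| := by
      intro e
      rw [chain_cons', Pi.add_apply]
      by_cases he : d.1 = e
      · rw [← he, h0, add_zero, abs_zero, add_zero]
      · have : dartChain d e = 0 := by simp [dartChain, he]
        rw [this, zero_add, abs_zero, zero_add]
    have : ∑ e, l e * (|chain (d :: w) e| : ℝ) =
        ∑ e, (l e * (|dartChain d e| : ℝ) + l e * (|chain w e| : ℝ)) := by
      apply Finset.sum_congr rfl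
      intro e _
      rw [← Int.cast_abs, ← Int.cast_abs, ← Int.cast_abs, habs e]; push_cast; ring
    rw [this, Finset.sum_add_distrib, sum_abs_dartChain', ← ih hnd.2]
    simp [walkLength]

lemma abs_chain_le_one' {w : List (Dart E)} (hnd : (w.map Prod.fst).Nodup) (e : E) :
    |chain w e| ≤ 1 := by
  induction w with
  | nil => simp [chain_nil']
  | cons d w ih =>
    rw [List.map_cons, List.nodup_cons] at hnd
    rw [chain_cons', Pi.add_apply]
    by_cases he : d.1 = e
    · have h0 : chain w e = 0 := chain_eq_zero' fun d' hd' h =>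
        hnd.1 (by rw [← he] at h; exact h ▸ List.mem_map_of_mem (f := Prod.fst) hd')
      rw [h0, add_zero, abs_dartChain', if_pos he]
    · have : dartChain d e = 0 := by simp [dartChain, he]
      rw [this, zero_add]
      exact ih hnd.2

lemma boundary_add' [Fintype E] (G : Multigraph V E) (x y : E → ℤ) :
    G.boundary (x + y) = G.boundary x + G.boundary y := by
  funext v
  simp [boundary, add_mul, Finset.sum_add_distrib]

lemma boundary_dartChain' [Fintype E] (G : Multigraph V E) (d : Dart E) :
    G.boundary (dartChain d) = fun v =>
      (if G.dtgt d = v then 1 else 0) - (if G.dsrc d = v then 1 else 0) := by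
  funext v
  unfold boundary
  rw [Finset.sum_eq_single d.1]
  · rcases d with ⟨e, b⟩
    cases b <;> simp [dartChain, dsrc, dtgt] <;> ring
  · intro e _ he
    simp [dartChain, Ne.symm he]
  · intro h; exact absurd (Finset.mem_univ _) h

lemma boundary_chain_eq' [Fintype E] (G : Multigraph V E) :
    ∀ (w : List (Dart E)) (d0 dl : Dart E),
      List.Chain' (fun d d' => G.dtgt d = G.dsrc d') w →
      w.head? = some d0 → w.getLast? = some dl →
      G.boundary (chain w) = fun v =>
        (if G.dtgt dl = v then 1 else 0) - (if G.dsrc d0 = v then 1 else 0)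
  | [], _, _, _, h0, _ => by simp at h0
  | [d], d0, dl, _, h0, hl => by
      simp only [List.head?_cons, Option.some.injEq] at h0
      simp only [List.getLast?_singleton, Option.some.injEq] at hl
      subst h0; subst hl
      have h : chain [d] = dartChain d := by simp [chain]
      rw [h, boundary_dartChain']
  | d :: d' :: rest, d0, dl, hch, h0, hl => by
      simp only [List.head?_cons, Option.some.injEq] at h0
      subst h0
      rw [List.getLast?_cons_cons] at hl
      replace hch := List.isChain_cons_cons.mp hch
      have ih := boundary_chain_eq' G (d' :: rest) d' dl hch.2 rfl hl
      funext v
      rw [chain_cons', boundary_add', Pi.add_apply, boundary_dartChain', ih, hch.1]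
      ring

lemma boundary_chain_closed' [Fintype E] (G : Multigraph V E) {w : List (Dart E)}
    (hw : G.IsClosedWalk w) : G.boundary (chain w) = 0 := by
  obtain ⟨hne, hch, hcl⟩ := hw
  have h0 : w.head? = some (w.head hne) := List.head?_eq_head hne
  have hlast : w.getLast? = some (w.getLast hne) := List.getLast?_eq_getLast hne
  have := boundary_chain_eq' G w (w.head hne) (w.getLast hne) hch h0 hlast
  have hcl' := hcl _ hlast _ h0
  funext v
  rw [this, hcl']
  simp

lemma mod_closure' {n : ℕ} (S : Set ℕ) (hS : ∀ i ∈ S, (i + 1) % n ∈ S)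
    {i0 : ℕ} (hi0 : i0 ∈ S) (hi0n : i0 < n) : ∀ j < n, j ∈ S := by
  have key : ∀ k, (i0 + k) % n ∈ S := by
    intro k
    induction k with
    | zero => simpa [Nat.mod_eq_of_lt hi0n] using hi0
    | succ k ih =>
      have := hS _ ih
      rw [Nat.mod_add_mod] at this
      rwa [← Nat.add_assoc]
  intro j hj
  have := key (n - i0 + j)
  rwa [show i0 + (n - i0 + j) = n + j by omega, Nat.add_mod_left,
    Nat.mod_eq_of_lt hj] at this

end Multigraph

/-- if a nonzero homology class `μ` decomposes as `μ = κ + κ'` or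
`μ = κ - κ'` with `κ, κ'` nonzero homology classes and `l(κ) + l(κ') ≤ l(μ)`, then no
minimal-length closed walk representing `μ` is a cycle. -/
theorem stmt15 {V E : Type} [Fintype V] [Fintype E] (G : Multigraph V E)
    (l : E → ℝ) (hl : ∀ e, 0 < l e)
    (μ κ κ' : E → ℤ) (hμ : μ ≠ 0) (hκ : κ ≠ 0) (hκ' : κ' ≠ 0)
    (hrμ : ∃ w, G.IsClosedWalk w ∧ Multigraph.chain w = μ)
    (hrκ : ∃ w, G.IsClosedWalk w ∧ Multigraph.chain w = κ)
    (hrκ' : ∃ w, G.IsClosedWalk w ∧ Multigraph.chain w = κ')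
    (hdec : μ = κ + κ' ∨ μ = κ - κ')
    (hlen : G.minLen l κ + G.minLen l κ' ≤ G.minLen l μ) :
    ∀ w, G.IsClosedWalk w → Multigraph.chain w = μ →
      Multigraph.walkLength l w = G.minLen l μ → ¬ G.IsCycle w := by
  intro w hw hchain hmin hcyc
  obtain ⟨-, hnde, hndv⟩ := hcyc
  obtain ⟨hne, hch, hclo⟩ := hw
  have hlen0 : 0 < w.length := List.length_pos_iff.mpr hne
  -- pointwise absolute-value facts
  have hμ1 : ∀ e, |μ e| ≤ 1 := fun e => hchain ▸ abs_chain_le_one' hnde e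
  have htri : ∀ e, |μ e| ≤ |κ e| + |κ' e| := by
    intro e
    rcases hdec with h | h <;> rw [h]
    · simp only [Pi.add_apply]; exact abs_add_le _ _
    · simp only [Pi.sub_apply]; exact abs_sub _ _
  -- lower bound for minLen
  have hlb : ∀ h : E → ℤ, (∃ w', G.IsClosedWalk w' ∧ Multigraph.chain w' = h) →
      ∑ e, l e * |(h e : ℝ)| ≤ G.minLen l h := by
    rintro h ⟨w', hw', hc'⟩
    apply le_csInf
    · exact ⟨walkLength l w', w', hw', hc', rfl⟩
    rintro x ⟨w2, hw2, hc2, rfl⟩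
    calc ∑ e, l e * |(h e : ℝ)|
        = ∑ e, l e * |((Multigraph.chain w2 e : ℤ) : ℝ)| := by rw [hc2]
      _ ≤ walkLength l w2 := sum_abs_le_walkLength' l (fun e => (hl e).le) w2
  have hκlb := hlb κ hrκ
  have hκ'lb := hlb κ' hrκ'
  have hμval : G.minLen l μ = ∑ e, l e * |(μ e : ℝ)| := by
    rw [← hmin, ← hchain]
    exact walkLength_eq_of_nodup' l hnde
  have hsum : ∑ e, (l e * |(κ e : ℝ)| + l e * |(κ' e : ℝ)|) ≤ ∑ e, l e * |(μ e : ℝ)| := by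
    rw [Finset.sum_add_distrib]
    calc ∑ e, l e * |(κ e : ℝ)| + ∑ e, l e * |(κ' e : ℝ)|
        ≤ G.minLen l κ + G.minLen l κ' := add_le_add hκlb hκ'lb
      _ ≤ G.minLen l μ := hlen
      _ = ∑ e, l e * |(μ e : ℝ)| := hμval
  have hptle : ∀ e ∈ Finset.univ, l e * |(μ e : ℝ)| ≤ l e * |(κ e : ℝ)| + l e * |(κ' e : ℝ)| := by
    intro e _
    rw [← mul_add]
    apply mul_le_mul_of_nonneg_left _ (hl e).le
    exact_mod_cast htri e
  have heqs : ∀ e ∈ Finset.univ,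
      l e * |(μ e : ℝ)| = l e * |(κ e : ℝ)| + l e * |(κ' e : ℝ)| :=
    (Finset.sum_eq_sum_iff_of_le hptle).mp
      (le_antisymm (Finset.sum_le_sum hptle) hsum)
  have hZeq : ∀ e, |μ e| = |κ e| + |κ' e| := by
    intro e
    have h1 : |(μ e : ℝ)| = |(κ e : ℝ)| + |(κ' e : ℝ)| := by
      have h2 := heqs e (Finset.mem_univ e)
      rw [← mul_add] at h2
      exact mul_left_cancel₀ (ne_of_gt (hl e)) h2
    exact_mod_cast h1
  have hone : ∀ z : ℤ, z ≠ 0 → 1 ≤ |z| := fun z => Int.one_le_abs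
  have hdisj' : ∀ e, κ' e ≠ 0 → κ e = 0 := by
    intro e he
    have h1 := hone _ he
    have h2 := hZeq e
    have h3 := hμ1 e
    have h4 := abs_nonneg (κ e)
    have h5 : |κ e| = 0 := by omega
    exact abs_eq_zero.mp h5
  have hμκ : ∀ e, κ e ≠ 0 → μ e ≠ 0 := by
    intro e he h0
    have h1 := hone _ he
    have h2 := hZeq e
    rw [h0, abs_zero] at h2
    have h4 := abs_nonneg (κ' e)
    omega
  have hμκ' : ∀ e, κ' e ≠ 0 → μ e ≠ 0 := by
    intro e he h0
    have h1 := hone _ he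
    have h2 := hZeq e
    rw [h0, abs_zero] at h2
    have h4 := abs_nonneg (κ e)
    omega
  -- cyclic structure of the walk
  have hgetcongr : ∀ a b (ha : a < w.length) (hb : b < w.length), a = b →
      (w[a]'ha) = (w[b]'hb) := by
    intro a b ha hb h
    subst h
    rfl
  have hcycsucc : ∀ k (hk : k < w.length),
      G.dtgt (w[k]'hk) = G.dsrc (w[(k+1) % w.length]'(Nat.mod_lt _ hlen0)) := by
    intro k hk
    by_cases h : k + 1 < w.length
    · have h2 : (k+1) % w.length = k+1 := Nat.mod_eq_of_lt h
      have h3 := List.isChain_iff_getElem.mp hch k (by omega)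
      rw [show (w[(k+1) % w.length]'(Nat.mod_lt _ hlen0)) = (w[k+1]'h) from
        hgetcongr _ _ _ _ h2]
      exact h3
    · have hk1 : k + 1 = w.length := by omega
      have h2 : (k+1) % w.length = 0 := by rw [hk1, Nat.mod_self]
      rw [show (w[(k+1) % w.length]'(Nat.mod_lt _ hlen0)) = (w[0]'hlen0) from
        hgetcongr _ _ _ _ h2]
      have hlast : w.getLast? = some (w[k]'hk) := by
        rw [List.getLast?_eq_getLast hne, List.getLast_eq_getElem]
        exact congrArg some (hgetcongr _ _ _ _ (by omega))
      have hhead : w.head? = some (w[0]'hlen0) := by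
        rw [List.head?_eq_head hne]
        exact congrArg some (List.getElem_zero hlen0).symm
      exact hclo _ hlast _ hhead
  have hvinj : ∀ k j (hk : k < w.length) (hj : j < w.length),
      G.dsrc (w[k]'hk) = G.dsrc (w[j]'hj) → k = j := by
    intro k j hk hj h
    have hk' : k < (w.map G.dsrc).length := by simpa using hk
    have hj' : j < (w.map G.dsrc).length := by simpa using hj
    exact (List.Nodup.getElem_inj_iff hndv (hi := hk') (hj := hj')).mp (by simpa using h)
  have hsuccinj : ∀ a b, a < w.length → b < w.length →
      (a+1) % w.length = (b+1) % w.length → a = b := by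
    intro a b ha hb h
    have e1 : (a+1) % w.length = if a+1 = w.length then 0 else a+1 := by
      split_ifs with h'
      · rw [h', Nat.mod_self]
      · exact Nat.mod_eq_of_lt (by omega)
    have e2 : (b+1) % w.length = if b+1 = w.length then 0 else b+1 := by
      split_ifs with h'
      · rw [h', Nat.mod_self]
      · exact Nat.mod_eq_of_lt (by omega)
    rw [e1, e2] at h
    split_ifs at h <;> omega
  -- every edge in the support of μ appears in w
  have hedge : ∀ e, μ e ≠ 0 → ∃ k, ∃ hk : k < w.length, (w[k]'hk).1 = e := by
    intro e he
    by_contra hno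
    push_neg at hno
    apply he
    rw [← hchain]
    apply chain_eq_zero'
    intro d hd hde
    obtain ⟨k, hk, hdk⟩ := List.mem_iff_getElem.mp hd
    exact hno k hk (by rw [hdk, hde])
  -- supports of κ and κ' give indices
  obtain ⟨e0, he0⟩ := Function.ne_iff.mp hκ
  rw [Pi.zero_apply] at he0
  obtain ⟨i0, hi0n, hi0e⟩ := hedge e0 (hμκ e0 he0)
  obtain ⟨e1, he1⟩ := Function.ne_iff.mp hκ'
  rw [Pi.zero_apply] at he1
  obtain ⟨j0, hj0n, hj0e⟩ := hedge e1 (hμκ' e1 he1)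
  -- a break point in the support of κ along the cycle
  obtain ⟨f, hfdef⟩ : ∃ f : ℕ → E, f = fun i => (w.getD i (w.head hne)).1 := ⟨_, rfl⟩
  have hfeq : ∀ i (h : i < w.length), f i = (w[i]'h).1 := by
    intro i h
    rw [hfdef]
    exact congrArg Prod.fst (List.getD_eq_getElem w _ h)
  have hex : ∃ i, ∃ h : i < w.length, κ (f i) ≠ 0 ∧ κ (f ((i+1) % w.length)) = 0 := by
    by_contra hno
    push_neg at hno
    have hclosed : ∀ i ∈ {i | i < w.length ∧ κ (f i) ≠ 0},
        (i+1) % w.length ∈ {i | i < w.length ∧ κ (f i) ≠ 0} := by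
      rintro i ⟨hin, hiκ⟩
      exact ⟨Nat.mod_lt _ hlen0, hno i hin hiκ⟩
    have hi0S : i0 ∈ {i | i < w.length ∧ κ (f i) ≠ 0} :=
      ⟨hi0n, by rw [hfeq i0 hi0n, hi0e]; exact he0⟩
    have hall := mod_closure' _ hclosed hi0S hi0n j0 hj0n
    apply hall.2
    rw [hfeq j0 hj0n, hj0e]
    exact hdisj' e1 he1
  obtain ⟨i, hin, hiκ, hjκ0⟩ := hex
  obtain ⟨j, hjdef⟩ : ∃ j, j = (i+1) % w.length := ⟨_, rfl⟩
  have hjn : j < w.length := by rw [hjdef]; exact Nat.mod_lt _ hlen0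
  have hiκ' : κ ((w[i]'hin).1) ≠ 0 := by rw [← hfeq i hin]; exact hiκ
  have hjκ' : κ ((w[j]'hjn).1) = 0 := by
    rw [← hfeq j hjn, hjdef]
    exact hjκ0
  have hij : i ≠ j := by
    intro h
    apply hiκ'
    rw [hgetcongr i j hin hjn h]
    exact hjκ'
  -- the vertex where κ's boundary is nonzero
  obtain ⟨v, hvdef⟩ : ∃ v, v = G.dsrc (w[j]'hjn) := ⟨_, rfl⟩
  have hdtgt_i : G.dtgt (w[i]'hin) = v := by
    rw [hvdef]
    have := hcycsucc i hin
    rw [this]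
    exact congrArg G.dsrc (hgetcongr _ _ _ _ hjdef.symm)
  have hsrci : G.dsrc (w[i]'hin) ≠ v := by
    rw [hvdef]
    intro h
    exact hij (hvinj i j hin hjn h)
  -- boundary of κ is zero
  obtain ⟨wκ, hwκ, hcκ⟩ := hrκ
  have hbκ : G.boundary κ = 0 := hcκ ▸ boundary_chain_closed' G hwκ
  have hb0 : G.boundary κ v = 0 := by rw [hbκ]; rfl
  -- compute the boundary of κ at v
  have hkey : G.boundary κ v =
      κ ((w[i]'hin).1) * ((if G.tgt ((w[i]'hin).1) = v then 1 else 0) -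
        (if G.src ((w[i]'hin).1) = v then 1 else 0)) := by
    show (∑ e, κ e * ((if G.tgt e = v then 1 else 0) - (if G.src e = v then 1 else 0))) = _
    rw [Finset.sum_eq_single ((w[i]'hin).1)]
    · intro e _ hei
      by_cases hκe : κ e = 0
      · rw [hκe, zero_mul]
      · obtain ⟨k, hk, hke⟩ := hedge e (hμκ e hκe)
        have hki : k ≠ i := by
          intro h
          exact hei (by rw [← hke]; exact congrArg Prod.fst (hgetcongr _ _ _ _ h))
        have hkS : κ ((w[k]'hk).1) ≠ 0 := by rw [hke]; exact hκe
        have hne1 : G.dsrc (w[k]'hk) ≠ v := by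
          rw [hvdef]
          intro h
          apply hkS
          rw [hgetcongr k j hk hjn (hvinj k j hk hjn h)]
          exact hjκ'
        have hne2 : G.dtgt (w[k]'hk) ≠ v := by
          rw [hcycsucc k hk, hvdef]
          intro h
          apply hki
          apply hsuccinj k i hk hin
          rw [← hjdef]
          exact hvinj _ j (Nat.mod_lt _ hlen0) hjn h
        rcases hdk : (w[k]'hk) with ⟨ek, bk⟩
        rw [hdk] at hke hne1 hne2
        simp only at hke
        subst hke
        cases bk
        · simp [dsrc, dtgt] at hne1 hne2
          simp [hne1, hne2]
        · simp [dsrc, dtgt] at hne1 hne2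
          simp [hne1, hne2]
    · intro h
      exact absurd (Finset.mem_univ _) h
  rw [hkey] at hb0
  rcases hdi : (w[i]'hin) with ⟨ei, bi⟩
  rw [hdi] at hb0 hiκ' hdtgt_i hsrci
  simp only at hb0 hiκ'
  cases bi
  · simp [dsrc, dtgt] at hdtgt_i hsrci
    rw [if_pos hdtgt_i, if_neg hsrci] at hb0
    simp at hb0
    exact hiκ' hb0
  · simp [dsrc, dtgt] at hdtgt_i hsrci
    rw [if_pos hdtgt_i, if_neg hsrci] at hb0
    simp at hb0
    exact hiκ' hb0
end
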